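/- arXiv:1908.06070 — 6 statements merged into one kernel-verified Lean document; each statement's English description precedes it below -/
import Mathlib

section
/- If π₁ and π₂ are symmetric and unimodal around 0 ∈ ℝ^{n₁} and 0 ∈ ℝ^{n₂}, respectively, then (x̃¹, x̃²) = (0, 0) is a global minimizer of J_κ, i.e., J_κ(0, 0) ≤ J_κ(x̃¹, x̃²) for all (x̃¹, x̃²) ∈ ℝ^{n₁} × ℝ^{n₂}. -/
open MeasureTheory ProbabilityTheory

/-- A function on `ℝ^n` is *symmetric and unimodal* around `a` if
`‖x − a‖ ≤ ‖y − a‖` implies `f x ≥ f y`. -/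
def SymmUnimodal {n : ℕ} (f : EuclideanSpace ℝ (Fin n) → ℝ)
    (a : EuclideanSpace ℝ (Fin n)) : Prop :=
  ∀ x y : EuclideanSpace ℝ (Fin n), ‖x - a‖ ≤ ‖y - a‖ → f y ≤ f x

/-- `π` is the probability density function of the random vector `X` (with respect to
Lebesgue measure). -/
def IsDensityOf {Ω : Type} [MeasurableSpace Ω] (μ : Measure Ω) {n : ℕ}
    (X : Ω → EuclideanSpace ℝ (Fin n)) (π : EuclideanSpace ℝ (Fin n) → ℝ) : Prop :=
  Measurable π ∧ (∀ x, 0 ≤ π x) ∧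
    μ.map X = (volume : Measure (EuclideanSpace ℝ (Fin n))).withDensity
      fun x => ENNReal.ofReal (π x)

set_option maxHeartbeats 1000000 in
/-- Key algebraic decomposition of the integrand. -/
lemma aux_min_decomp (a b κ : ℝ) :
    min (a + b) (min (b + κ) (a + κ)) =
      min a κ + min b κ + min (max (a - κ) 0) (max (b - κ) 0) := by
  rcases le_total a κ with h1 | h1 <;> rcases le_total b κ with h2 | h2 <;>
    rcases le_total a b with h3 | h3 <;>
    simp only [min_def, max_def] <;> split_ifs <;> linarith

open Metric Set in
/-- Intersecting a norm-monotone set with a ball of fixed radius has largest volume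
when the ball is centered at the origin. -/
lemma aux_vol_inter_ball_le {n : ℕ} (S : Set (EuclideanSpace ℝ (Fin n)))
    (hS : ∀ x y : EuclideanSpace ℝ (Fin n), ‖x‖ ≤ ‖y‖ → y ∈ S → x ∈ S)
    (c : EuclideanSpace ℝ (Fin n)) (r : ℝ) :
    volume (S ∩ closedBall c r) ≤ volume (S ∩ closedBall (0 : EuclideanSpace ℝ (Fin n)) r) := by
  by_cases hb : closedBall (0 : EuclideanSpace ℝ (Fin n)) r ⊆ S
  · rw [Set.inter_eq_right.mpr hb]
    calc volume (S ∩ closedBall c r) ≤ volume (closedBall c r) :=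
          measure_mono Set.inter_subset_right
      _ = volume (closedBall (0 : EuclideanSpace ℝ (Fin n)) r) :=
          Measure.addHaar_closedBall_center _ _ _
  · obtain ⟨z, hz, hzS⟩ := Set.not_subset.mp hb
    have hSsub : S ⊆ closedBall (0 : EuclideanSpace ℝ (Fin n)) r := by
      intro x hx
      have h1 : ¬ ‖z‖ ≤ ‖x‖ := fun h => hzS (hS z x h hx)
      have h2 : ‖z‖ ≤ r := mem_closedBall_zero_iff.mp hz
      exact mem_closedBall_zero_iff.mpr (le_trans (le_of_not_ge h1) h2)
    rw [Set.inter_eq_left.mpr hSsub]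
    exact measure_mono Set.inter_subset_left

open Metric Set in
/-- Anderson-type inequality for symmetric unimodal densities. -/
lemma aux_anderson_ball {n : ℕ} (π : EuclideanSpace ℝ (Fin n) → ℝ)
    (hm : Measurable π) (hnn : ∀ x, 0 ≤ π x) (hsu : SymmUnimodal π 0)
    (c : EuclideanSpace ℝ (Fin n)) (r : ℝ) :
    ∫⁻ x in closedBall c r, ENNReal.ofReal (π x) ≤
      ∫⁻ x in closedBall (0 : EuclideanSpace ℝ (Fin n)) r, ENNReal.ofReal (π x) := by
  rw [lintegral_eq_lintegral_meas_lt _ (Filter.Eventually.of_forall hnn) hm.aemeasurable,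
      lintegral_eq_lintegral_meas_lt _ (Filter.Eventually.of_forall hnn) hm.aemeasurable]
  refine lintegral_mono fun t => ?_
  rw [Measure.restrict_apply (measurableSet_lt measurable_const hm),
      Measure.restrict_apply (measurableSet_lt measurable_const hm)]
  exact aux_vol_inter_ball_le _
    (fun x y hxy hy => hy.trans_le (hsu x y (by simpa using hxy))) c r

open Metric Set in
/-- Tail probabilities of `‖X − c‖²` are minimized at `c = 0` for symmetric unimodal
densities. -/
lemma aux_tail_mono {Ω : Type} [MeasurableSpace Ω] (μ : Measure Ω) [IsProbabilityMeasure μ]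
    {n : ℕ} (X : Ω → EuclideanSpace ℝ (Fin n)) (hX : Measurable X)
    (π : EuclideanSpace ℝ (Fin n) → ℝ) (hπ : IsDensityOf μ X π) (hsu : SymmUnimodal π 0)
    (c : EuclideanSpace ℝ (Fin n)) (t : ℝ) :
    μ {ω | t < ‖X ω‖ ^ 2} ≤ μ {ω | t < ‖X ω - c‖ ^ 2} := by
  obtain ⟨hm, hnn, hmap⟩ := hπ
  rcases lt_or_ge t 0 with ht | ht
  · have h1 : {ω | t < ‖X ω‖ ^ 2} = univ :=
      eq_univ_of_forall fun ω => lt_of_lt_of_le ht (by positivity)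
    have h2 : {ω | t < ‖X ω - c‖ ^ 2} = univ :=
      eq_univ_of_forall fun ω => lt_of_lt_of_le ht (by positivity)
    rw [h1, h2]
  · have key : ∀ c' : EuclideanSpace ℝ (Fin n),
        μ {ω | ‖X ω - c'‖ ^ 2 ≤ t} =
          ∫⁻ x in closedBall c' (Real.sqrt t), ENNReal.ofReal (π x) := by
      intro c'
      have hset : {ω | ‖X ω - c'‖ ^ 2 ≤ t} = X ⁻¹' (closedBall c' (Real.sqrt t)) := by
        ext ω
        simp only [mem_setOf_eq, mem_preimage, mem_closedBall, dist_eq_norm]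
        constructor
        · intro h
          calc ‖X ω - c'‖ = Real.sqrt (‖X ω - c'‖ ^ 2) := (Real.sqrt_sq (norm_nonneg _)).symm
            _ ≤ Real.sqrt t := Real.sqrt_le_sqrt h
        · intro h
          nlinarith [Real.sq_sqrt ht, Real.sqrt_nonneg t, norm_nonneg (X ω - c')]
      rw [hset, ← Measure.map_apply hX measurableSet_closedBall, hmap,
          withDensity_apply _ measurableSet_closedBall]
    have hmeas : ∀ c' : EuclideanSpace ℝ (Fin n),
        MeasurableSet {ω | ‖X ω - c'‖ ^ 2 ≤ t} :=
      fun c' => measurableSet_le ((hX.sub measurable_const).norm.pow measurable_const)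
        measurable_const
    have hcompl : ∀ c' : EuclideanSpace ℝ (Fin n),
        {ω | t < ‖X ω - c'‖ ^ 2} = {ω | ‖X ω - c'‖ ^ 2 ≤ t}ᶜ := by
      intro c'; ext ω; simp [not_le]
    have h0 : {ω | t < ‖X ω‖ ^ 2} = {ω | ‖X ω - 0‖ ^ 2 ≤ t}ᶜ := by
      ext ω; simp [not_le]
    rw [h0, hcompl c, prob_compl_eq_one_sub (hmeas 0), prob_compl_eq_one_sub (hmeas c)]
    refine tsub_le_tsub_left ?_ 1
    rw [key 0, key c]
    exact aux_anderson_ball π hm hnn hsu c _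

open Metric Set in
/-- If the densities `π₁, π₂` of the independent sources are symmetric
and unimodal around the origin, then `(0, 0)` is a global minimizer of
`J_κ(x̃¹, x̃²) = E[min{‖X¹−x̃¹‖² + ‖X²−x̃²‖², ‖X²−x̃²‖² + κ, ‖X¹−x̃¹‖² + κ}]`. -/
theorem zero_is_global_minimizer
    {Ω : Type} [MeasurableSpace Ω] (μ : Measure Ω) [IsProbabilityMeasure μ]
    (n₁ n₂ : ℕ)
    (X1 : Ω → EuclideanSpace ℝ (Fin n₁)) (X2 : Ω → EuclideanSpace ℝ (Fin n₂))
    (hX1 : Measurable X1) (hX2 : Measurable X2)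
    (π₁ : EuclideanSpace ℝ (Fin n₁) → ℝ) (π₂ : EuclideanSpace ℝ (Fin n₂) → ℝ)
    (hπ₁ : IsDensityOf μ X1 π₁) (hπ₂ : IsDensityOf μ X2 π₂)
    (hπ₁su : SymmUnimodal π₁ 0) (hπ₂su : SymmUnimodal π₂ 0)
    (hX1m : Integrable (fun ω => ‖X1 ω‖ ^ 2) μ)
    (hX2m : Integrable (fun ω => ‖X2 ω‖ ^ 2) μ)
    (hindep : IndepFun X1 X2 μ)
    (κ : ℝ) (hκ : 0 ≤ κ)
    (J : EuclideanSpace ℝ (Fin n₁) → EuclideanSpace ℝ (Fin n₂) → ℝ)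
    (hJ : ∀ xt1 xt2, J xt1 xt2 = ∫ ω, min
      (‖X1 ω - xt1‖ ^ 2 + ‖X2 ω - xt2‖ ^ 2)
      (min (‖X2 ω - xt2‖ ^ 2 + κ) (‖X1 ω - xt1‖ ^ 2 + κ)) ∂μ) :
    ∀ xt1 xt2, J 0 0 ≤ J xt1 xt2 := by
  intro c d
  -- measurability of the basic pieces
  have ma : ∀ e : EuclideanSpace ℝ (Fin n₁), Measurable fun ω => ‖X1 ω - e‖ ^ 2 :=
    fun e => (hX1.sub measurable_const).norm.pow measurable_const
  have mb : ∀ e : EuclideanSpace ℝ (Fin n₂), Measurable fun ω => ‖X2 ω - e‖ ^ 2 :=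
    fun e => (hX2.sub measurable_const).norm.pow measurable_const
  have mF : ∀ (e : EuclideanSpace ℝ (Fin n₁)) (f : EuclideanSpace ℝ (Fin n₂)),
      Measurable fun ω => min (‖X1 ω - e‖ ^ 2 + ‖X2 ω - f‖ ^ 2)
        (min (‖X2 ω - f‖ ^ 2 + κ) (‖X1 ω - e‖ ^ 2 + κ)) :=
    fun e f => ((ma e).add (mb f)).min (((mb f).add_const κ).min ((ma e).add_const κ))
  have hFnn : ∀ (e : EuclideanSpace ℝ (Fin n₁)) (f : EuclideanSpace ℝ (Fin n₂)) ω,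
      0 ≤ min (‖X1 ω - e‖ ^ 2 + ‖X2 ω - f‖ ^ 2)
        (min (‖X2 ω - f‖ ^ 2 + κ) (‖X1 ω - e‖ ^ 2 + κ)) :=
    fun e f ω => le_min (by positivity) (le_min (by positivity) (by positivity))
  -- tail comparisons from Anderson's lemma
  have tail1 : ∀ t, μ {ω | t < ‖X1 ω - (0 : EuclideanSpace ℝ (Fin n₁))‖ ^ 2} ≤
      μ {ω | t < ‖X1 ω - c‖ ^ 2} := by
    intro t
    simpa [sub_zero] using aux_tail_mono μ X1 hX1 π₁ hπ₁ hπ₁su c t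
  have tail2 : ∀ t, μ {ω | t < ‖X2 ω - (0 : EuclideanSpace ℝ (Fin n₂))‖ ^ 2} ≤
      μ {ω | t < ‖X2 ω - d‖ ^ 2} := by
    intro t
    simpa [sub_zero] using aux_tail_mono μ X2 hX2 π₂ hπ₂ hπ₂su d t
  -- integrability, hence finiteness of the lintegral
  have hint : ∀ (e : EuclideanSpace ℝ (Fin n₁)) (f : EuclideanSpace ℝ (Fin n₂)),
      Integrable (fun ω => min (‖X1 ω - e‖ ^ 2 + ‖X2 ω - f‖ ^ 2)
        (min (‖X2 ω - f‖ ^ 2 + κ) (‖X1 ω - e‖ ^ 2 + κ))) μ := by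
    intro e f
    have hg : Integrable (fun ω => 2 * ‖X1 ω‖ ^ 2 + (2 * ‖e‖ ^ 2 + κ)) μ :=
      (hX1m.const_mul 2).add (integrable_const _)
    refine hg.mono ((mF e f).aestronglyMeasurable) (Filter.Eventually.of_forall fun ω => ?_)
    have hb1 : ‖X1 ω - e‖ ≤ ‖X1 ω‖ + ‖e‖ := norm_sub_le _ _
    have hb2 : min (‖X1 ω - e‖ ^ 2 + ‖X2 ω - f‖ ^ 2)
        (min (‖X2 ω - f‖ ^ 2 + κ) (‖X1 ω - e‖ ^ 2 + κ)) ≤ ‖X1 ω - e‖ ^ 2 + κ :=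
      (min_le_right _ _).trans (min_le_right _ _)
    have hnn := hFnn e f ω
    have hb3 : ‖X1 ω - e‖ * ‖X1 ω - e‖ ≤ (‖X1 ω‖ + ‖e‖) * (‖X1 ω‖ + ‖e‖) :=
      mul_self_le_mul_self (norm_nonneg _) hb1
    rw [Real.norm_eq_abs, Real.norm_eq_abs, abs_of_nonneg hnn, abs_of_nonneg (by positivity)]
    nlinarith [sq_nonneg (‖X1 ω‖ - ‖e‖), norm_nonneg (X1 ω - e), norm_nonneg (X1 ω), norm_nonneg e]
  have hfin : ∀ (e : EuclideanSpace ℝ (Fin n₁)) (f : EuclideanSpace ℝ (Fin n₂)),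
      (∫⁻ ω, ENNReal.ofReal (min (‖X1 ω - e‖ ^ 2 + ‖X2 ω - f‖ ^ 2)
        (min (‖X2 ω - f‖ ^ 2 + κ) (‖X1 ω - e‖ ^ 2 + κ))) ∂μ) ≠ ⊤ :=
    fun e f => (hint e f).lintegral_lt_top.ne
  -- Bochner integral as toReal of the lintegral
  have hrepr : ∀ (e : EuclideanSpace ℝ (Fin n₁)) (f : EuclideanSpace ℝ (Fin n₂)),
      (∫ ω, min (‖X1 ω - e‖ ^ 2 + ‖X2 ω - f‖ ^ 2)
        (min (‖X2 ω - f‖ ^ 2 + κ) (‖X1 ω - e‖ ^ 2 + κ)) ∂μ) =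
      (∫⁻ ω, ENNReal.ofReal (min (‖X1 ω - e‖ ^ 2 + ‖X2 ω - f‖ ^ 2)
        (min (‖X2 ω - f‖ ^ 2 + κ) (‖X1 ω - e‖ ^ 2 + κ))) ∂μ).toReal :=
    fun e f => integral_eq_lintegral_of_nonneg_ae
      (Filter.Eventually.of_forall (hFnn e f)) ((mF e f).aestronglyMeasurable)
  -- decomposition of the lintegral into three pieces
  have hdecomp : ∀ (e : EuclideanSpace ℝ (Fin n₁)) (f : EuclideanSpace ℝ (Fin n₂)),
      (∫⁻ ω, ENNReal.ofReal (min (‖X1 ω - e‖ ^ 2 + ‖X2 ω - f‖ ^ 2)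
        (min (‖X2 ω - f‖ ^ 2 + κ) (‖X1 ω - e‖ ^ 2 + κ))) ∂μ) =
      (∫⁻ ω, ENNReal.ofReal (min (‖X1 ω - e‖ ^ 2) κ) ∂μ) +
      (∫⁻ ω, ENNReal.ofReal (min (‖X2 ω - f‖ ^ 2) κ) ∂μ) +
      (∫⁻ ω, ENNReal.ofReal (min (max (‖X1 ω - e‖ ^ 2 - κ) 0)
        (max (‖X2 ω - f‖ ^ 2 - κ) 0)) ∂μ) := by
    intro e f
    have heq : ∀ ω, ENNReal.ofReal (min (‖X1 ω - e‖ ^ 2 + ‖X2 ω - f‖ ^ 2)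
        (min (‖X2 ω - f‖ ^ 2 + κ) (‖X1 ω - e‖ ^ 2 + κ))) =
        ENNReal.ofReal (min (‖X1 ω - e‖ ^ 2) κ) +
        ENNReal.ofReal (min (‖X2 ω - f‖ ^ 2) κ) +
        ENNReal.ofReal (min (max (‖X1 ω - e‖ ^ 2 - κ) 0) (max (‖X2 ω - f‖ ^ 2 - κ) 0)) := by
      intro ω
      rw [aux_min_decomp, ENNReal.ofReal_add, ENNReal.ofReal_add]
      · exact le_min (by positivity) hκ
      · exact le_min (by positivity) hκ
      · exact add_nonneg (le_min (by positivity) hκ) (le_min (by positivity) hκ)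
      · exact le_min (le_max_right _ _) (le_max_right _ _)
    rw [lintegral_congr heq]
    rw [lintegral_add_right _ ((((ma e).sub_const κ).max measurable_const).min
          (((mb f).sub_const κ).max measurable_const)).ennreal_ofReal,
        lintegral_add_right _ ((mb f).min measurable_const).ennreal_ofReal]
  -- comparison of the first piece
  have comp1 : (∫⁻ ω, ENNReal.ofReal
        (min (‖X1 ω - (0 : EuclideanSpace ℝ (Fin n₁))‖ ^ 2) κ) ∂μ) ≤
      ∫⁻ ω, ENNReal.ofReal (min (‖X1 ω - c‖ ^ 2) κ) ∂μ := by
    rw [lintegral_eq_lintegral_meas_lt μ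
        (Filter.Eventually.of_forall fun ω => le_min (by positivity) hκ)
        ((ma 0).min measurable_const).aemeasurable,
      lintegral_eq_lintegral_meas_lt μ
        (Filter.Eventually.of_forall fun ω => le_min (by positivity) hκ)
        ((ma c).min measurable_const).aemeasurable]
    refine lintegral_mono fun t => ?_
    by_cases htκ : t < κ
    · have hs : ∀ e : EuclideanSpace ℝ (Fin n₁),
          {ω | t < min (‖X1 ω - e‖ ^ 2) κ} = {ω | t < ‖X1 ω - e‖ ^ 2} := by
        intro e; ext ω; simp [lt_min_iff, htκ]
      rw [hs, hs]
      exact tail1 t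
    · have hs : {ω | t < min (‖X1 ω - (0 : EuclideanSpace ℝ (Fin n₁))‖ ^ 2) κ} = ∅ :=
        eq_empty_iff_forall_notMem.mpr fun ω h => htκ (h.trans_le (min_le_right _ _))
      rw [hs]
      simp only [measure_empty]
      exact zero_le
  -- comparison of the second piece
  have comp2 : (∫⁻ ω, ENNReal.ofReal
        (min (‖X2 ω - (0 : EuclideanSpace ℝ (Fin n₂))‖ ^ 2) κ) ∂μ) ≤
      ∫⁻ ω, ENNReal.ofReal (min (‖X2 ω - d‖ ^ 2) κ) ∂μ := by
    rw [lintegral_eq_lintegral_meas_lt μ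
        (Filter.Eventually.of_forall fun ω => le_min (by positivity) hκ)
        ((mb 0).min measurable_const).aemeasurable,
      lintegral_eq_lintegral_meas_lt μ
        (Filter.Eventually.of_forall fun ω => le_min (by positivity) hκ)
        ((mb d).min measurable_const).aemeasurable]
    refine lintegral_mono fun t => ?_
    by_cases htκ : t < κ
    · have hs : ∀ e : EuclideanSpace ℝ (Fin n₂),
          {ω | t < min (‖X2 ω - e‖ ^ 2) κ} = {ω | t < ‖X2 ω - e‖ ^ 2} := by
        intro e; ext ω; simp [lt_min_iff, htκ]
      rw [hs, hs]
      exact tail2 t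
    · have hs : {ω | t < min (‖X2 ω - (0 : EuclideanSpace ℝ (Fin n₂))‖ ^ 2) κ} = ∅ :=
        eq_empty_iff_forall_notMem.mpr fun ω h => htκ (h.trans_le (min_le_right _ _))
      rw [hs]
      simp only [measure_empty]
      exact zero_le
  -- comparison of the third piece, using independence
  have comp3 : (∫⁻ ω, ENNReal.ofReal
        (min (max (‖X1 ω - (0 : EuclideanSpace ℝ (Fin n₁))‖ ^ 2 - κ) 0)
          (max (‖X2 ω - (0 : EuclideanSpace ℝ (Fin n₂))‖ ^ 2 - κ) 0)) ∂μ) ≤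
      ∫⁻ ω, ENNReal.ofReal (min (max (‖X1 ω - c‖ ^ 2 - κ) 0)
        (max (‖X2 ω - d‖ ^ 2 - κ) 0)) ∂μ := by
    have mmm : ∀ (e : EuclideanSpace ℝ (Fin n₁)) (f : EuclideanSpace ℝ (Fin n₂)),
        Measurable fun ω => min (max (‖X1 ω - e‖ ^ 2 - κ) 0) (max (‖X2 ω - f‖ ^ 2 - κ) 0) :=
      fun e f => (((ma e).sub_const κ).max measurable_const).min
        (((mb f).sub_const κ).max measurable_const)
    have nnn : ∀ (e : EuclideanSpace ℝ (Fin n₁)) (f : EuclideanSpace ℝ (Fin n₂)) (ω : Ω),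
        0 ≤ min (max (‖X1 ω - e‖ ^ 2 - κ) 0) (max (‖X2 ω - f‖ ^ 2 - κ) 0) :=
      fun e f ω => le_min (le_max_right _ _) (le_max_right _ _)
    rw [lintegral_eq_lintegral_meas_lt μ
        (Filter.Eventually.of_forall (nnn 0 0)) (mmm 0 0).aemeasurable,
      lintegral_eq_lintegral_meas_lt μ
        (Filter.Eventually.of_forall (nnn c d)) (mmm c d).aemeasurable]
    refine lintegral_mono_ae ((ae_restrict_iff' measurableSet_Ioi).mpr
      (Filter.Eventually.of_forall fun t ht => ?_))
    have ht0 : (0 : ℝ) < t := Set.mem_Ioi.mp ht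
    have hset : ∀ (e : EuclideanSpace ℝ (Fin n₁)) (f : EuclideanSpace ℝ (Fin n₂)),
        {ω | t < min (max (‖X1 ω - e‖ ^ 2 - κ) 0) (max (‖X2 ω - f‖ ^ 2 - κ) 0)} =
          X1 ⁻¹' {x | t + κ < ‖x - e‖ ^ 2} ∩ X2 ⁻¹' {y | t + κ < ‖y - f‖ ^ 2} := by
      intro e f
      ext ω
      simp only [mem_setOf_eq, mem_inter_iff, mem_preimage, lt_min_iff, lt_max_iff,
        lt_sub_iff_add_lt, or_iff_left (not_lt.mpr ht0.le)]
    have hmS1 : ∀ e : EuclideanSpace ℝ (Fin n₁),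
        MeasurableSet {x : EuclideanSpace ℝ (Fin n₁) | t + κ < ‖x - e‖ ^ 2} :=
      fun e => measurableSet_lt measurable_const
        ((measurable_id.sub measurable_const).norm.pow measurable_const)
    have hmS2 : ∀ f : EuclideanSpace ℝ (Fin n₂),
        MeasurableSet {y : EuclideanSpace ℝ (Fin n₂) | t + κ < ‖y - f‖ ^ 2} :=
      fun f => measurableSet_lt measurable_const
        ((measurable_id.sub measurable_const).norm.pow measurable_const)
    rw [hset, hset,
      hindep.measure_inter_preimage_eq_mul _ _ (hmS1 0) (hmS2 0),
      hindep.measure_inter_preimage_eq_mul _ _ (hmS1 c) (hmS2 d)]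
    exact mul_le_mul' (tail1 (t + κ)) (tail2 (t + κ))
  -- put everything together
  rw [hJ, hJ, hrepr 0 0, hrepr c d]
  refine ENNReal.toReal_mono (hfin c d) ?_
  rw [hdecomp 0 0, hdecomp c d]
  exact add_le_add (add_le_add comp1 comp2) comp3
end

section
/- If π₁ is symmetric and unimodal around 0 ∈ ℝ^{n₁} (with no assumption on π₂ beyond being a probability density function with finite second moment), then for every x̃¹ ∈ ℝ^{n₁} and every x̃² ∈ ℝ^{n₂}, J_κ(0, x̃²) ≤ J_κ(x̃¹, x̃²). -/
open MeasureTheory ProbabilityTheory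

open Metric Set in
lemma aux_ball {n : ℕ} (π : EuclideanSpace ℝ (Fin n) → ℝ)
    (hsu : SymmUnimodal π 0) (c : EuclideanSpace ℝ (Fin n)) (r : ℝ) (hr : 0 ≤ r) :
    (volume.withDensity fun x => ENNReal.ofReal (π x)) (closedBall c r)
      ≤ (volume.withDensity fun x => ENNReal.ofReal (π x)) (closedBall 0 r) := by
  by_cases hc : c = 0
  · subst hc; exact le_rfl
  obtain ⟨z, hz⟩ : ∃ z : EuclideanSpace ℝ (Fin n), ‖z‖ = r := by
    refine ⟨(r / ‖c‖) • c, ?_⟩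
    have hc' : ‖c‖ ≠ 0 := norm_ne_zero_iff.mpr hc
    rw [norm_smul, Real.norm_eq_abs, abs_div, abs_of_nonneg hr, abs_norm,
      div_mul_cancel₀ _ hc']
  set ν := volume.withDensity fun x => ENNReal.ofReal (π x) with hν
  set K0 := closedBall (0 : EuclideanSpace ℝ (Fin n)) r with hK0def
  set Kc := closedBall c r with hKcdef
  have hK0 : MeasurableSet K0 := measurableSet_closedBall
  have hKc : MeasurableSet Kc := measurableSet_closedBall
  have hA : MeasurableSet (Kc \ K0) := hKc.diff hK0
  have hB : MeasurableSet (K0 \ Kc) := hK0.diff hKc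
  have hvol : volume (Kc \ K0) = volume (K0 \ Kc) := by
    have h1 : volume (Kc \ K0) + volume (Kc ∩ K0) = volume Kc :=
      measure_diff_add_inter _ hK0
    have h2 : volume (K0 \ Kc) + volume (Kc ∩ K0) = volume K0 := by
      rw [Set.inter_comm]; exact measure_diff_add_inter _ hKc
    have h3 : volume Kc = volume K0 :=
      Measure.addHaar_closedBall_center volume c r
    have hfin : volume (Kc ∩ K0) ≠ ⊤ :=
      ((measure_mono Set.inter_subset_right).trans_lt measure_closedBall_lt_top).ne
    have := h1.trans (h3.trans h2.symm)
    exact WithTop.add_right_cancel hfin this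
  have hAν : ν (Kc \ K0) ≤ ENNReal.ofReal (π z) * volume (Kc \ K0) := by
    rw [hν, withDensity_apply _ hA]
    calc ∫⁻ x in Kc \ K0, ENNReal.ofReal (π x) ∂volume
        ≤ ∫⁻ _ in Kc \ K0, ENNReal.ofReal (π z) ∂volume := by
          refine setLIntegral_mono' hA fun x hx => ENNReal.ofReal_le_ofReal ?_
          refine hsu z x ?_
          have hx' : r < ‖x‖ := by
            have h := hx.2
            simp only [hK0def, mem_closedBall, dist_zero_right, not_le] at h
            exact h
          simpa [hz] using hx'.le
      _ = ENNReal.ofReal (π z) * volume (Kc \ K0) := setLIntegral_const _ _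
  have hBν : ENNReal.ofReal (π z) * volume (K0 \ Kc) ≤ ν (K0 \ Kc) := by
    rw [hν, withDensity_apply _ hB]
    calc ENNReal.ofReal (π z) * volume (K0 \ Kc)
        = ∫⁻ _ in K0 \ Kc, ENNReal.ofReal (π z) ∂volume := (setLIntegral_const _ _).symm
      _ ≤ ∫⁻ x in K0 \ Kc, ENNReal.ofReal (π x) ∂volume := by
          refine setLIntegral_mono' hB fun x hx => ENNReal.ofReal_le_ofReal ?_
          refine hsu x z ?_
          have hx' : ‖x‖ ≤ r := by
            have h := hx.1
            simpa [hK0def, mem_closedBall, dist_zero_right] using h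
          simpa [hz] using hx'
  have e1 : ν Kc = ν (Kc \ K0) + ν (Kc ∩ K0) := (measure_diff_add_inter _ hK0).symm
  have e2 : ν K0 = ν (K0 \ Kc) + ν (Kc ∩ K0) := by
    rw [Set.inter_comm]; exact (measure_diff_add_inter _ hKc).symm
  rw [e1, e2]
  refine add_le_add ?_ le_rfl
  calc ν (Kc \ K0) ≤ ENNReal.ofReal (π z) * volume (Kc \ K0) := hAν
    _ = ENNReal.ofReal (π z) * volume (K0 \ Kc) := by rw [hvol]
    _ ≤ ν (K0 \ Kc) := hBν

open Metric Set in
lemma aux_key {n : ℕ} (π : EuclideanSpace ℝ (Fin n) → ℝ)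
    (hsu : SymmUnimodal π 0) (ν : Measure (EuclideanSpace ℝ (Fin n)))
    (hν : ν = volume.withDensity fun x => ENNReal.ofReal (π x))
    [IsFiniteMeasure ν]
    (c : EuclideanSpace ℝ (Fin n)) (m M : ℝ) (hm : 0 ≤ m) (hM : 0 ≤ M) :
    ∫⁻ x, ENNReal.ofReal (min (‖x - 0‖ ^ 2 + m) M) ∂ν
      ≤ ∫⁻ x, ENNReal.ofReal (min (‖x - c‖ ^ 2 + m) M) ∂ν := by
  have hcont : ∀ c : EuclideanSpace ℝ (Fin n),
      Measurable fun x : EuclideanSpace ℝ (Fin n) => min (‖x - c‖ ^ 2 + m) M := fun c =>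
    ((((continuous_id.sub continuous_const).norm.pow 2).add continuous_const).min
      continuous_const).measurable
  have hnn : ∀ (c : EuclideanSpace ℝ (Fin n)) x, 0 ≤ min (‖x - c‖ ^ 2 + m) M := fun c x =>
    le_min (add_nonneg (sq_nonneg _) hm) hM
  rw [lintegral_eq_lintegral_meas_lt ν (ae_of_all _ (hnn 0)) (hcont 0).aemeasurable,
     lintegral_eq_lintegral_meas_lt ν (ae_of_all _ (hnn c)) (hcont c).aemeasurable]
  refine lintegral_mono_ae ?_
  filter_upwards [self_mem_ae_restrict measurableSet_Ioi] with t ht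
  by_cases hM' : t < M
  · by_cases hs : t - m < 0
    · have h1 : ∀ c' : EuclideanSpace ℝ (Fin n),
          {x : EuclideanSpace ℝ (Fin n) | t < min (‖x - c'‖ ^ 2 + m) M} = univ := by
        intro c'
        refine eq_univ_of_forall fun x => ?_
        simp only [mem_setOf_eq, lt_min_iff]
        exact ⟨by nlinarith [sq_nonneg ‖x - c'‖], hM'⟩
      rw [h1 0, h1 c]
    · push_neg at hs
      have hsq : ∀ c' : EuclideanSpace ℝ (Fin n),
          {x : EuclideanSpace ℝ (Fin n) | t < min (‖x - c'‖ ^ 2 + m) M}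
            = (closedBall c' (Real.sqrt (t - m)))ᶜ := by
        intro c'
        ext x
        simp only [mem_setOf_eq, mem_compl_iff, mem_closedBall, dist_eq_norm, lt_min_iff,
          not_le]
        constructor
        · rintro ⟨h1, -⟩
          have hpos : 0 < ‖x - c'‖ := by nlinarith [norm_nonneg (x - c')]
          exact (Real.sqrt_lt' hpos).mpr (by linarith)
        · intro h
          have h2 := Real.sq_sqrt hs
          have h3 := Real.sqrt_nonneg (t - m)
          exact ⟨by nlinarith, hM'⟩
      rw [hsq 0, hsq c,
        measure_compl measurableSet_closedBall (measure_ne_top ν _),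
        measure_compl measurableSet_closedBall (measure_ne_top ν _)]
      refine tsub_le_tsub_left ?_ _
      rw [hν]
      exact aux_ball π hsu c _ (Real.sqrt_nonneg _)
  · have h1 : ∀ c' : EuclideanSpace ℝ (Fin n),
        {x : EuclideanSpace ℝ (Fin n) | t < min (‖x - c'‖ ^ 2 + m) M} = ∅ := by
      intro c'
      refine eq_empty_iff_forall_notMem.mpr fun x hx => ?_
      simp only [mem_setOf_eq, lt_min_iff] at hx
      exact hM' hx.2
    rw [h1 0, h1 c]

lemma aux_min_iden (a b κ : ℝ) :
    min (a + b) (min (b + κ) (a + κ)) = min (a + min b κ) (b + κ) := by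
  rw [← min_add_add_left a b κ, min_assoc, min_comm (a + κ) (b + κ)]

/-- If the density `π₁` of the first source is symmetric and unimodal
around the origin (with no assumption on `π₂` beyond being a density of a source with
finite second moment), then replacing `x̃¹` by `0` can only decrease
`J_κ(x̃¹, x̃²) = E[min{‖X¹−x̃¹‖² + ‖X²−x̃²‖², ‖X²−x̃²‖² + κ, ‖X¹−x̃¹‖² + κ}]`. -/
theorem zero_first_coordinate_improves
    {Ω : Type} [MeasurableSpace Ω] (μ : Measure Ω) [IsProbabilityMeasure μ]
    (n₁ n₂ : ℕ)
    (X1 : Ω → EuclideanSpace ℝ (Fin n₁)) (X2 : Ω → EuclideanSpace ℝ (Fin n₂))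
    (hX1 : Measurable X1) (hX2 : Measurable X2)
    (π₁ : EuclideanSpace ℝ (Fin n₁) → ℝ) (π₂ : EuclideanSpace ℝ (Fin n₂) → ℝ)
    (hπ₁ : IsDensityOf μ X1 π₁) (hπ₂ : IsDensityOf μ X2 π₂)
    (hπ₁su : SymmUnimodal π₁ 0)
    (hX1m : Integrable (fun ω => ‖X1 ω‖ ^ 2) μ)
    (hX2m : Integrable (fun ω => ‖X2 ω‖ ^ 2) μ)
    (hindep : IndepFun X1 X2 μ)
    (κ : ℝ) (hκ : 0 ≤ κ)
    (J : EuclideanSpace ℝ (Fin n₁) → EuclideanSpace ℝ (Fin n₂) → ℝ)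
    (hJ : ∀ xt1 xt2, J xt1 xt2 = ∫ ω, min
      (‖X1 ω - xt1‖ ^ 2 + ‖X2 ω - xt2‖ ^ 2)
      (min (‖X2 ω - xt2‖ ^ 2 + κ) (‖X1 ω - xt1‖ ^ 2 + κ)) ∂μ) :
    ∀ xt1 xt2, J 0 xt2 ≤ J xt1 xt2 := by
  intro xt1 xt2
  rw [hJ, hJ]
  set G : EuclideanSpace ℝ (Fin n₁) → EuclideanSpace ℝ (Fin n₁) × EuclideanSpace ℝ (Fin n₂) → ℝ :=
    fun c p => min (‖p.1 - c‖ ^ 2 + ‖p.2 - xt2‖ ^ 2)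
      (min (‖p.2 - xt2‖ ^ 2 + κ) (‖p.1 - c‖ ^ 2 + κ)) with hGdef
  have hGcont : ∀ c, Continuous (G c) := by
    intro c
    apply Continuous.min
    · exact (((continuous_fst.sub continuous_const).norm.pow 2)).add
        (((continuous_snd.sub continuous_const).norm.pow 2))
    · exact Continuous.min
        ((((continuous_snd.sub continuous_const).norm.pow 2)).add continuous_const)
        ((((continuous_fst.sub continuous_const).norm.pow 2)).add continuous_const)
  have hGnn : ∀ c p, 0 ≤ G c p := by
    intro c p
    refine le_min (add_nonneg (sq_nonneg _) (sq_nonneg _))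
      (le_min (add_nonneg (sq_nonneg _) hκ) (add_nonneg (sq_nonneg _) hκ))
  have hGm : ∀ c, Measurable fun ω => G c (X1 ω, X2 ω) := fun c =>
    (hGcont c).measurable.comp (hX1.prodMk hX2)
  have hrw : ∀ c, (∫ ω, min (‖X1 ω - c‖ ^ 2 + ‖X2 ω - xt2‖ ^ 2)
        (min (‖X2 ω - xt2‖ ^ 2 + κ) (‖X1 ω - c‖ ^ 2 + κ)) ∂μ)
      = (∫⁻ ω, ENNReal.ofReal (G c (X1 ω, X2 ω)) ∂μ).toReal := by
    intro c
    exact integral_eq_lintegral_of_nonneg_ae (ae_of_all _ fun ω => hGnn c (X1 ω, X2 ω))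
      (hGm c).aestronglyMeasurable
  rw [hrw 0, hrw xt1]
  -- finiteness of the RHS lintegral
  have hbound : Integrable (fun ω => 2 * ‖X2 ω‖ ^ 2 + (2 * ‖xt2‖ ^ 2 + κ)) μ :=
    (hX2m.const_mul 2).add (integrable_const _)
  have hfin : ∀ c, (∫⁻ ω, ENNReal.ofReal (G c (X1 ω, X2 ω)) ∂μ) ≠ ⊤ := by
    intro c
    have hle : ∀ ω, G c (X1 ω, X2 ω) ≤ 2 * ‖X2 ω‖ ^ 2 + (2 * ‖xt2‖ ^ 2 + κ) := by
      intro ω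
      have h1 : G c (X1 ω, X2 ω) ≤ ‖X2 ω - xt2‖ ^ 2 + κ :=
        le_trans (min_le_right _ _) (min_le_left _ _)
      have h2 : ‖X2 ω - xt2‖ ≤ ‖X2 ω‖ + ‖xt2‖ := norm_sub_le _ _
      nlinarith [norm_nonneg (X2 ω - xt2), norm_nonneg (X2 ω), norm_nonneg xt2,
        sq_nonneg (‖X2 ω‖ - ‖xt2‖)]
    refine ne_of_lt (lt_of_le_of_lt ?_ hbound.lintegral_lt_top)
    exact lintegral_mono fun ω => ENNReal.ofReal_le_ofReal (hle ω)
  refine ENNReal.toReal_mono (hfin xt1) ?_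
  -- pass to the product measure
  haveI : IsProbabilityMeasure (μ.map X1) := Measure.isProbabilityMeasure_map hX1.aemeasurable
  haveI : IsProbabilityMeasure (μ.map X2) := Measure.isProbabilityMeasure_map hX2.aemeasurable
  have hmap : μ.map (fun ω => (X1 ω, X2 ω)) = (μ.map X1).prod (μ.map X2) :=
    (indepFun_iff_map_prod_eq_prod_map_map hX1.aemeasurable hX2.aemeasurable).mp hindep
  have hlin : ∀ c, (∫⁻ ω, ENNReal.ofReal (G c (X1 ω, X2 ω)) ∂μ)
      = ∫⁻ y, ∫⁻ x, ENNReal.ofReal (G c (x, y)) ∂(μ.map X1) ∂(μ.map X2) := by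
    intro c
    have hGme : Measurable fun p => ENNReal.ofReal (G c p) :=
      ENNReal.measurable_ofReal.comp (hGcont c).measurable
    rw [← lintegral_map hGme (hX1.prodMk hX2), hmap,
      lintegral_prod_symm _ hGme.aemeasurable]
  rw [hlin 0, hlin xt1]
  refine lintegral_mono fun y => ?_
  -- inner inequality via aux_key
  have hiden : ∀ (c : EuclideanSpace ℝ (Fin n₁)) (x : EuclideanSpace ℝ (Fin n₁)),
      G c (x, y) = min (‖x - c‖ ^ 2 + min (‖y - xt2‖ ^ 2) κ) (‖y - xt2‖ ^ 2 + κ) := by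
    intro c x
    exact aux_min_iden _ _ _
  simp only [hiden]
  haveI : IsFiniteMeasure (μ.map X1) := inferInstance
  exact aux_key π₁ hπ₁su (μ.map X1) hπ₁.2.2 xt1 _ _
    (le_min (sq_nonneg _) hκ) (add_nonneg (sq_nonneg _) hκ)
end

section
/- In the value recursion, for every t ∈ {1, …, T + 1}, the function e ↦ V_t(e) is nonincreasing on {0, 1, …, B}. -/
open MeasureTheory ProbabilityTheory

private lemma vz_int {Ω : Type} [MeasurableSpace Ω] (μ : Measure Ω) [IsProbabilityMeasure μ]
    (W : ℕ → ℝ) (Z : Ω → ℕ) (hZ : Measurable Z) (e B : ℕ) :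
    Integrable (fun ω => W (min (e + Z ω) B)) μ := by
  have hm : Measurable (fun ω => W (min (e + Z ω) B)) :=
    (measurable_from_top (f := fun n : ℕ => W (min (e + n) B))).comp hZ
  refine Integrable.mono' (integrable_const (∑ k ∈ Finset.range (B+1), |W k|))
    hm.aestronglyMeasurable (Filter.Eventually.of_forall fun ω => ?_)
  rw [Real.norm_eq_abs]
  exact Finset.single_le_sum (fun i _ => abs_nonneg (W i))
    (Finset.mem_range.2 (Nat.lt_succ_of_le (min_le_right _ _)))

private lemma vz_mono {Ω : Type} [MeasurableSpace Ω] (μ : Measure Ω) [IsProbabilityMeasure μ]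
    (W : ℕ → ℝ) (Z : Ω → ℕ) (hZ : Measurable Z) (B : ℕ)
    (hW : ∀ a b : ℕ, a ≤ b → b ≤ B → W b ≤ W a) {e e' : ℕ} (h : e ≤ e') :
    (∫ ω, W (min (e' + Z ω) B) ∂μ) ≤ ∫ ω, W (min (e + Z ω) B) ∂μ :=
  integral_mono (vz_int μ W Z hZ e' B) (vz_int μ W Z hZ e B) fun ω =>
    hW _ _ (min_le_min (Nat.add_le_add_right h _) le_rfl) (min_le_right _ _)

/-- In the value recursion of the dynamic program, the value
function `V t` is nonincreasing in the battery level `e ∈ {0, …, B}`, for every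
`t ∈ {1, …, T + 1}`. -/
theorem value_function_nonincreasing
    {Ω : Type} [MeasurableSpace Ω] (μ : Measure Ω) [IsProbabilityMeasure μ]
    (n₁ n₂ B T : ℕ) (hB : 1 ≤ B) (c : ℝ) (hc : 0 ≤ c)
    (Z : Ω → ℕ) (hZmeas : Measurable Z) (hZint : Integrable (fun ω => (Z ω : ℝ)) μ)
    (X1 : Ω → EuclideanSpace ℝ (Fin n₁)) (X2 : Ω → EuclideanSpace ℝ (Fin n₂))
    (hX1 : Measurable X1) (hX2 : Measurable X2)
    (hX1m : Integrable (fun ω => ‖X1 ω‖ ^ 2) μ)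
    (hX2m : Integrable (fun ω => ‖X2 ω‖ ^ 2) μ)
    (hindep12 : IndepFun X1 X2 μ)
    (hindepZ : IndepFun (fun ω => (X1 ω, X2 ω)) Z μ)
    (V : ℕ → ℕ → ℝ)
    (hVT : ∀ e, e ≤ B → V (T + 1) e = 0)
    (hV0 : ∀ t, 1 ≤ t → t ≤ T →
      V t 0 = (∫ ω, ‖X1 ω‖ ^ 2 ∂μ) + (∫ ω, ‖X2 ω‖ ^ 2 ∂μ) +
        ∫ ω, V (t + 1) (min (0 + Z ω) B) ∂μ)
    (hVe : ∀ t, 1 ≤ t → t ≤ T → ∀ e, 1 ≤ e → e ≤ B →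
      V t e = ∫ ω, min
        (‖X1 ω‖ ^ 2 + ‖X2 ω‖ ^ 2 + ∫ ω', V (t + 1) (min (e + Z ω') B) ∂μ)
        (min (‖X2 ω‖ ^ 2 + (c + ∫ ω', V (t + 1) (min (e - 1 + Z ω') B) ∂μ))
             (‖X1 ω‖ ^ 2 + (c + ∫ ω', V (t + 1) (min (e - 1 + Z ω') B) ∂μ))) ∂μ) :
    ∀ t, 1 ≤ t → t ≤ T + 1 → ∀ e e' : ℕ, e ≤ e' → e' ≤ B → V t e' ≤ V t e := by
  suffices H : ∀ k t, T + 1 = t + k → 1 ≤ t →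
      ∀ e e' : ℕ, e ≤ e' → e' ≤ B → V t e' ≤ V t e by
    intro t ht1 ht2 e e' hee heB
    exact H (T + 1 - t) t (by omega) ht1 e e' hee heB
  intro k
  induction k with
  | zero =>
    intro t htk _ e e' hee heB
    have : t = T + 1 := by omega
    subst this
    rw [hVT e' heB, hVT e (le_trans hee heB)]
  | succ k ih =>
    intro t htk ht1 e e' hee heB
    have htT : t ≤ T := by omega
    have ihW : ∀ a b : ℕ, a ≤ b → b ≤ B → V (t + 1) b ≤ V (t + 1) a :=
      fun a b hab hbB => ih (t + 1) (by omega) (by omega) a b hab hbB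
    -- integrability of min integrand
    have hint : ∀ f : ℕ, Integrable (fun ω => min
        (‖X1 ω‖ ^ 2 + ‖X2 ω‖ ^ 2 + ∫ ω', V (t + 1) (min (f + Z ω') B) ∂μ)
        (min (‖X2 ω‖ ^ 2 + (c + ∫ ω', V (t + 1) (min (f - 1 + Z ω') B) ∂μ))
             (‖X1 ω‖ ^ 2 + (c + ∫ ω', V (t + 1) (min (f - 1 + Z ω') B) ∂μ)))) μ := by
      intro f
      have h1 : Integrable (fun ω => ‖X1 ω‖ ^ 2 + ‖X2 ω‖ ^ 2 +
          ∫ ω', V (t + 1) (min (f + Z ω') B) ∂μ) μ :=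
        (hX1m.add hX2m).add (integrable_const _)
      have h2 : Integrable (fun ω => ‖X2 ω‖ ^ 2 +
          (c + ∫ ω', V (t + 1) (min (f - 1 + Z ω') B) ∂μ)) μ :=
        hX2m.add (integrable_const _)
      have h3 : Integrable (fun ω => ‖X1 ω‖ ^ 2 +
          (c + ∫ ω', V (t + 1) (min (f - 1 + Z ω') B) ∂μ)) μ :=
        hX1m.add (integrable_const _)
      exact h1.inf (h2.inf h3)
    rcases Nat.eq_zero_or_pos e with he0 | he1
    · subst he0
      rcases Nat.eq_zero_or_pos e' with he'0 | he'1
      · subst he'0; exact le_refl _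
      · rw [hVe t ht1 htT e' he'1 heB, hV0 t ht1 htT]
        calc (∫ ω, min
              (‖X1 ω‖ ^ 2 + ‖X2 ω‖ ^ 2 + ∫ ω', V (t + 1) (min (e' + Z ω') B) ∂μ)
              (min (‖X2 ω‖ ^ 2 + (c + ∫ ω', V (t + 1) (min (e' - 1 + Z ω') B) ∂μ))
                   (‖X1 ω‖ ^ 2 + (c + ∫ ω', V (t + 1) (min (e' - 1 + Z ω') B) ∂μ))) ∂μ)
            ≤ ∫ ω, (‖X1 ω‖ ^ 2 + ‖X2 ω‖ ^ 2 +
                ∫ ω', V (t + 1) (min (e' + Z ω') B) ∂μ) ∂μ := by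
              exact integral_mono (hint e') ((hX1m.add hX2m).add (integrable_const _))
                fun ω => min_le_left _ _
          _ = (∫ ω, ‖X1 ω‖ ^ 2 ∂μ) + (∫ ω, ‖X2 ω‖ ^ 2 ∂μ) +
                ∫ ω', V (t + 1) (min (e' + Z ω') B) ∂μ := by
              have hsum : Integrable (fun ω => ‖X1 ω‖ ^ 2 + ‖X2 ω‖ ^ 2) μ := hX1m.add hX2m
              rw [integral_add hsum (integrable_const _), integral_const,
                integral_add hX1m hX2m]
              simp
          _ ≤ (∫ ω, ‖X1 ω‖ ^ 2 ∂μ) + (∫ ω, ‖X2 ω‖ ^ 2 ∂μ) +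
                ∫ ω, V (t + 1) (min (0 + Z ω) B) ∂μ := by
              apply add_le_add le_rfl
              exact vz_mono μ _ Z hZmeas B ihW (Nat.zero_le e')
    · have he'1 : 1 ≤ e' := le_trans he1 hee
      rw [hVe t ht1 htT e he1 (le_trans hee heB), hVe t ht1 htT e' he'1 heB]
      refine integral_mono (hint e') (hint e) fun ω => ?_
      have hC0 := vz_mono μ (V (t+1)) Z hZmeas B ihW hee
      have hC1 := vz_mono μ (V (t+1)) Z hZmeas B ihW (Nat.sub_le_sub_right hee 1)
      exact min_le_min (by linarith) (min_le_min (by linarith) (by linarith))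
end

section
/- In the value recursion, C¹_{t+1}(e) ≥ C⁰_{t+1}(e) for every t ∈ {1, …, T} and every e ∈ {1, …, B}; consequently the threshold τ*_t(e) := √(C¹_{t+1}(e) − C⁰_{t+1}(e)) is a well-defined real number for all such t and e. -/
open MeasureTheory ProbabilityTheory

private lemma integrable_min' {Ω : Type} [MeasurableSpace Ω] {μ : Measure Ω} {f g : Ω → ℝ}
    (hf : Integrable f μ) (hg : Integrable g μ) :
    Integrable (fun ω => min (f ω) (g ω)) μ := by
  have := hf.inf hg
  simpa [Pi.inf_def] using this

private lemma integrable_comp_min {Ω : Type} [MeasurableSpace Ω] (μ : Measure Ω)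
    [IsProbabilityMeasure μ] (Z : Ω → ℕ) (hZ : Measurable Z) (f : ℕ → ℝ) (e B : ℕ) :
    Integrable (fun ω => f (min (e + Z ω) B)) μ := by
  have hmeas : Measurable fun ω => f (min (e + Z ω) B) :=
    (measurable_from_nat (f := fun n => f (min (e + n) B))).comp hZ
  refine (integrable_const ((Finset.range (B + 1)).sup' ⟨0, by simp⟩ fun k => |f k|)).mono'
    hmeas.aestronglyMeasurable ?_
  filter_upwards with ω
  have hm : min (e + Z ω) B ∈ Finset.range (B + 1) := by
    simp [Nat.lt_succ_iff]
  simpa using Finset.le_sup' (fun k => |f k|) hm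

/-- In the value recursion of the dynamic program, the continuation
cost of transmitting, `C¹_{t+1}(e) = c + E[V_{t+1}(min{e − 1 + Z, B})]`, dominates the
continuation cost of not transmitting, `C⁰_{t+1}(e) = E[V_{t+1}(min{e + Z, B})]`, for
every `t ∈ {1, …, T}` and `e ∈ {1, …, B}`; consequently the threshold
`τ*_t(e) = √(C¹_{t+1}(e) − C⁰_{t+1}(e))` is a well-defined real number, i.e. its square
recovers `C¹_{t+1}(e) − C⁰_{t+1}(e)`. -/
theorem continuation_costs_ordered_thresholds_well_defined
    {Ω : Type} [MeasurableSpace Ω] (μ : Measure Ω) [IsProbabilityMeasure μ]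
    (n₁ n₂ B T : ℕ) (hB : 1 ≤ B) (c : ℝ) (hc : 0 ≤ c)
    (Z : Ω → ℕ) (hZmeas : Measurable Z) (hZint : Integrable (fun ω => (Z ω : ℝ)) μ)
    (X1 : Ω → EuclideanSpace ℝ (Fin n₁)) (X2 : Ω → EuclideanSpace ℝ (Fin n₂))
    (hX1 : Measurable X1) (hX2 : Measurable X2)
    (hX1m : Integrable (fun ω => ‖X1 ω‖ ^ 2) μ)
    (hX2m : Integrable (fun ω => ‖X2 ω‖ ^ 2) μ)
    (hindep12 : IndepFun X1 X2 μ)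
    (hindepZ : IndepFun (fun ω => (X1 ω, X2 ω)) Z μ)
    (V : ℕ → ℕ → ℝ)
    (hVT : ∀ e, e ≤ B → V (T + 1) e = 0)
    (hV0 : ∀ t, 1 ≤ t → t ≤ T →
      V t 0 = (∫ ω, ‖X1 ω‖ ^ 2 ∂μ) + (∫ ω, ‖X2 ω‖ ^ 2 ∂μ) +
        ∫ ω, V (t + 1) (min (0 + Z ω) B) ∂μ)
    (hVe : ∀ t, 1 ≤ t → t ≤ T → ∀ e, 1 ≤ e → e ≤ B →
      V t e = ∫ ω, min
        (‖X1 ω‖ ^ 2 + ‖X2 ω‖ ^ 2 + ∫ ω', V (t + 1) (min (e + Z ω') B) ∂μ)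
        (min (‖X2 ω‖ ^ 2 + (c + ∫ ω', V (t + 1) (min (e - 1 + Z ω') B) ∂μ))
             (‖X1 ω‖ ^ 2 + (c + ∫ ω', V (t + 1) (min (e - 1 + Z ω') B) ∂μ))) ∂μ) :
    ∀ t, 1 ≤ t → t ≤ T → ∀ e, 1 ≤ e → e ≤ B →
      (∫ ω, V (t + 1) (min (e + Z ω) B) ∂μ) ≤
          c + ∫ ω, V (t + 1) (min (e - 1 + Z ω) B) ∂μ ∧
      Real.sqrt ((c + ∫ ω, V (t + 1) (min (e - 1 + Z ω) B) ∂μ) -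
            ∫ ω, V (t + 1) (min (e + Z ω) B) ∂μ) ^ 2 =
        (c + ∫ ω, V (t + 1) (min (e - 1 + Z ω) B) ∂μ) -
          ∫ ω, V (t + 1) (min (e + Z ω) B) ∂μ := by
  have hint : ∀ (s e : ℕ), Integrable (fun ω => V s (min (e + Z ω) B)) μ :=
    fun s e => integrable_comp_min μ Z hZmeas (V s) e B
  -- P s : V s is antitone on {0, ..., B}
  set P : ℕ → Prop := fun s => ∀ e, e ≤ B → ∀ e', e' ≤ e → V s e ≤ V s e' with hP
  have Cmono : ∀ s, P s → ∀ a b : ℕ, b ≤ a →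
      (∫ ω, V s (min (a + Z ω) B) ∂μ) ≤ ∫ ω, V s (min (b + Z ω) B) ∂μ := by
    intro s hPs a b hba
    refine integral_mono (hint s a) (hint s b) fun ω => ?_
    exact hPs _ (min_le_right _ _) _ (min_le_min (by omega) le_rfl)
  have base : P (T + 1) := by
    intro e he e' he'
    rw [hVT e he, hVT e' (le_trans he' he)]
  have step : ∀ t, 1 ≤ t → t ≤ T → P (t + 1) → P t := by
    intro t ht1 htT ih
    have step1 : ∀ e, 1 ≤ e → e ≤ B → V t e ≤ V t (e - 1) := by
      intro e he1 heB
      rcases Nat.lt_or_ge e 2 with h2 | h2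
      · -- e = 1
        have he : e = 1 := by omega
        subst he
        have h10 : (1 : ℕ) - 1 = 0 := rfl
        rw [h10, hVe t ht1 htT 1 le_rfl hB, hV0 t ht1 htT]
        have hA : Integrable (fun ω => ‖X1 ω‖ ^ 2 + ‖X2 ω‖ ^ 2 +
            ∫ ω', V (t + 1) (min (1 + Z ω') B) ∂μ) μ :=
          (hX1m.add hX2m).add (integrable_const _)
        have hB1 : Integrable (fun ω => min
            (‖X2 ω‖ ^ 2 + (c + ∫ ω', V (t + 1) (min (1 - 1 + Z ω') B) ∂μ))
            (‖X1 ω‖ ^ 2 + (c + ∫ ω', V (t + 1) (min (1 - 1 + Z ω') B) ∂μ))) μ :=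
          integrable_min' (hX2m.add (integrable_const _)) (hX1m.add (integrable_const _))
        calc (∫ ω, min (‖X1 ω‖ ^ 2 + ‖X2 ω‖ ^ 2 + ∫ ω', V (t + 1) (min (1 + Z ω') B) ∂μ)
              (min (‖X2 ω‖ ^ 2 + (c + ∫ ω', V (t + 1) (min (1 - 1 + Z ω') B) ∂μ))
                   (‖X1 ω‖ ^ 2 + (c + ∫ ω', V (t + 1) (min (1 - 1 + Z ω') B) ∂μ))) ∂μ)
            ≤ ∫ ω, (‖X1 ω‖ ^ 2 + ‖X2 ω‖ ^ 2 +
                ∫ ω', V (t + 1) (min (1 + Z ω') B) ∂μ) ∂μ := by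
              exact integral_mono (integrable_min' hA hB1) hA fun ω => min_le_left _ _
          _ = (∫ ω, ‖X1 ω‖ ^ 2 ∂μ) + (∫ ω, ‖X2 ω‖ ^ 2 ∂μ) +
                ∫ ω', V (t + 1) (min (1 + Z ω') B) ∂μ := by
              rw [integral_add (f := fun ω => ‖X1 ω‖ ^ 2 + ‖X2 ω‖ ^ 2)
                  (g := fun _ => ∫ ω', V (t + 1) (min (1 + Z ω') B) ∂μ)
                  (hX1m.add hX2m) (integrable_const _),
                integral_add (f := fun ω => ‖X1 ω‖ ^ 2) (g := fun ω => ‖X2 ω‖ ^ 2)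
                  hX1m hX2m, integral_const]
              simp
          _ ≤ (∫ ω, ‖X1 ω‖ ^ 2 ∂μ) + (∫ ω, ‖X2 ω‖ ^ 2 ∂μ) +
                ∫ ω, V (t + 1) (min (0 + Z ω) B) ∂μ := by
              have := Cmono (t + 1) ih 1 0 (by omega)
              linarith
      · -- e ≥ 2
        rw [hVe t ht1 htT e he1 heB, hVe t ht1 htT (e - 1) (by omega) (by omega)]
        have hC0 := Cmono (t + 1) ih e (e - 1) (by omega)
        have hC1 := Cmono (t + 1) ih (e - 1) (e - 1 - 1) (by omega)
        have hIe : ∀ a : ℕ, Integrable (fun ω => min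
            (‖X1 ω‖ ^ 2 + ‖X2 ω‖ ^ 2 + ∫ ω', V (t + 1) (min (a + Z ω') B) ∂μ)
            (min (‖X2 ω‖ ^ 2 + (c + ∫ ω', V (t + 1) (min (a - 1 + Z ω') B) ∂μ))
                 (‖X1 ω‖ ^ 2 + (c + ∫ ω', V (t + 1) (min (a - 1 + Z ω') B) ∂μ)))) μ :=
          fun a => integrable_min' ((hX1m.add hX2m).add (integrable_const _))
            (integrable_min' (hX2m.add (integrable_const _))
              (hX1m.add (integrable_const _)))
        refine integral_mono (hIe e) (hIe (e - 1)) fun ω => ?_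
        gcongr
    intro e
    induction e with
    | zero =>
      intro _ e' he'
      interval_cases e'
      exact le_rfl
    | succ n ihn =>
      intro he e' he'
      rcases Nat.lt_or_ge e' (n + 1) with h | h
      · have h1 : V t (n + 1) ≤ V t (n + 1 - 1) := step1 (n + 1) (by omega) he
        have h2 : V t n ≤ V t e' := ihn (by omega) e' (by omega)
        simpa using le_trans h1 h2
      · have : e' = n + 1 := le_antisymm he' h
        subst this
        exact le_rfl
  have main : ∀ d, d ≤ T → P (T + 1 - d) := by
    intro d
    induction d with
    | zero => intro _; simpa using base
    | succ k ihk =>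
      intro hk
      have h1 : P (T + 1 - k) := ihk (by omega)
      have heq : T + 1 - (k + 1) = T - k := by omega
      have heq2 : T - k + 1 = T + 1 - k := by omega
      rw [heq]
      exact step (T - k) (by omega) (by omega) (heq2 ▸ h1)
  intro t ht1 htT e he1 heB
  have hPt1 : P (t + 1) := by
    have := main (T - t) (by omega)
    rwa [show T + 1 - (T - t) = t + 1 by omega] at this
  have h1 : (∫ ω, V (t + 1) (min (e + Z ω) B) ∂μ) ≤
      c + ∫ ω, V (t + 1) (min (e - 1 + Z ω) B) ∂μ := by
    have := Cmono (t + 1) hPt1 e (e - 1) (by omega)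
    linarith
  exact ⟨h1, Real.sq_sqrt (by linarith)⟩
end

section
/- Let N ≥ 2 and let X¹, …, X^N be mutually independent random vectors, with X^i taking values in ℝ^{n_i}, having finite second moments and probability density functions that are symmetric and unimodal around 0. Let κ ≥ 0 and define, for (x̃¹, …, x̃^N) ∈ ℝ^{n₁} × ⋯ × ℝ^{n_N}, J(x̃¹, …, x̃^N) = E[ min{ Σ_{i=1}^N ‖X^i − x̃^i‖², min_{j ∈ {1,…,N}} ( Σ_{i ≠ j} ‖X^i − x̃^i‖² + κ ) } ]. Then (0, …, 0) is a global minimizer of J, i.e., J(0, …, 0) ≤ J(x̃¹, …, x̃^N) for all (x̃¹, …, x̃^N). -/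
open MeasureTheory ProbabilityTheory
open scoped ENNReal

section Helpers

lemma measurable_inf'_fun {ι Ω : Type*} [MeasurableSpace Ω] {s : Finset ι} (H : s.Nonempty)
    (f : ι → Ω → ℝ) (hf : ∀ i, Measurable (f i)) :
    Measurable fun ω => s.inf' H fun i => f i ω := by
  induction H using Finset.Nonempty.cons_induction with
  | singleton a =>
      have : (fun ω => ({a} : Finset ι).inf' (Finset.singleton_nonempty a) fun i => f i ω)
          = f a := by
        funext ω; simp
      rw [this]; exact hf a
  | cons a s ha hs ih =>
      simp only [Finset.inf'_cons (H := hs)]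
      exact (hf a).min ih

lemma inf'_const_add {ι : Type*} (s : Finset ι) (H : s.Nonempty) (c : ℝ) (f : ι → ℝ) :
    (s.inf' H fun i => c + f i) = c + s.inf' H f := by
  apply le_antisymm
  · obtain ⟨i, hi, hfi⟩ := s.exists_mem_eq_inf' H f
    rw [hfi]
    exact Finset.inf'_le _ hi
  · exact Finset.le_inf' _ _ fun b hb => add_le_add_right (Finset.inf'_le _ hb) c

lemma inf'_subtype {α : Type*} (T : Finset α) (H1 : (Finset.univ : Finset ↥T).Nonempty)
    (H2 : T.Nonempty) (v : α → ℝ) :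
    ((Finset.univ : Finset ↥T).inf' H1 fun i => v ↑i) = T.inf' H2 v := by
  apply le_antisymm
  · obtain ⟨b, hb, hfb⟩ := T.exists_mem_eq_inf' H2 v
    rw [hfb]
    exact Finset.inf'_le _ (Finset.mem_univ (⟨b, hb⟩ : ↥T))
  · exact Finset.le_inf' _ _ fun b _ => Finset.inf'_le _ b.2

open Finset in
lemma min_inf'_split {N : ℕ} (H : (Finset.univ : Finset (Fin N)).Nonempty) (j : Fin N)
    (hT : (Finset.univ.erase j).Nonempty) (u : Fin N → ℝ) (κ : ℝ) :
    min (∑ i, u i) (Finset.univ.inf' H fun j' => (∑ i ∈ Finset.univ.erase j', u i) + κ)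
      = min (u j + min (∑ i ∈ Finset.univ.erase j, u i)
          ((Finset.univ.erase j).inf' hT fun j' =>
            (∑ i ∈ (Finset.univ.erase j).erase j', u i) + κ))
        ((∑ i ∈ Finset.univ.erase j, u i) + κ) := by
  set T := Finset.univ.erase j with hTdef
  have hsplit : ∑ i, u i = u j + ∑ i ∈ T, u i := (Finset.add_sum_erase _ u (mem_univ j)).symm
  set f : Fin N → ℝ := fun j' => (∑ i ∈ Finset.univ.erase j', u i) + κ with hf
  have hinf : Finset.univ.inf' H f = min (f j) (T.inf' hT f) := by
    apply le_antisymm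
    · refine le_min (Finset.inf'_le _ (mem_univ j)) ?_
      refine Finset.le_inf' _ _ fun b hb => Finset.inf'_le _ (mem_univ b)
    · refine Finset.le_inf' _ _ fun b _ => ?_
      by_cases hbj : b = j
      · subst hbj; exact min_le_left _ _
      · exact le_trans (min_le_right _ _) (Finset.inf'_le _ (Finset.mem_erase.2 ⟨hbj, mem_univ b⟩))
  have hfj' : ∀ j' ∈ T, f j' = u j + ((∑ i ∈ T.erase j', u i) + κ) := by
    intro j' hj'
    have hjj' : j ≠ j' := fun h => (Finset.mem_erase.1 hj').1 h.symm
    have : ∑ i ∈ Finset.univ.erase j', u i = u j + ∑ i ∈ (Finset.univ.erase j').erase j, u i :=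
      (Finset.add_sum_erase _ u (Finset.mem_erase.2 ⟨hjj', mem_univ j⟩)).symm
    show (∑ i ∈ Finset.univ.erase j', u i) + κ = _
    rw [this, Finset.erase_right_comm]
    ring
  have hTinf : T.inf' hT f = u j + T.inf' hT fun j' => (∑ i ∈ T.erase j', u i) + κ := by
    rw [Finset.inf'_congr hT rfl hfj', inf'_const_add]
  have hfj : f j = (∑ i ∈ T, u i) + κ := rfl
  rw [hinf, hfj, hTinf, hsplit, min_comm ((∑ i ∈ T, u i) + κ), ← min_assoc, min_add_add_left]

open Metric in
lemma anderson {m : ℕ} (π : EuclideanSpace ℝ (Fin m) → ℝ) (hm : Measurable π)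
    (hsu : SymmUnimodal π 0)
    (a : EuclideanSpace ℝ (Fin m)) (r : ℝ) (hr : 0 ≤ r) :
    volume.withDensity (fun x => ENNReal.ofReal (π x)) (Metric.closedBall a r)
      ≤ volume.withDensity (fun x => ENNReal.ofReal (π x)) (Metric.closedBall 0 r) := by
  rcases Nat.eq_zero_or_pos m with hm0 | hm0
  · subst hm0
    have : a = 0 := PiLp.ext fun i => i.elim0
    rw [this]
  set ν := volume.withDensity (fun x => ENNReal.ofReal (π x)) with hν
  set B0 := Metric.closedBall (0 : EuclideanSpace ℝ (Fin m)) r with hB0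
  set Ba := Metric.closedBall a r with hBa
  have hB0m : MeasurableSet B0 := measurableSet_closedBall
  have hBam : MeasurableSet Ba := measurableSet_closedBall
  set zpt : EuclideanSpace ℝ (Fin m) := r • (EuclideanSpace.single (⟨0, hm0⟩ : Fin m) (1:ℝ))
    with hzpt
  have hz : ‖zpt‖ = r := by
    rw [hzpt, norm_smul, EuclideanSpace.norm_single]
    simp [abs_of_nonneg hr]
  set c := ENNReal.ofReal (π zpt) with hc
  have hπm : Measurable fun x => ENNReal.ofReal (π x) := hm.ennreal_ofReal
  have key1 : ∀ x ∈ Ba \ B0, ENNReal.ofReal (π x) ≤ c := by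
    intro x hx
    apply ENNReal.ofReal_le_ofReal
    apply hsu
    rw [sub_zero, sub_zero, hz]
    have : ¬ ‖x‖ ≤ r := by simpa [hB0, mem_closedBall, dist_zero_right] using hx.2
    linarith [not_le.1 this]
  have key2 : ∀ x ∈ B0 \ Ba, c ≤ ENNReal.ofReal (π x) := by
    intro x hx
    apply ENNReal.ofReal_le_ofReal
    apply hsu
    rw [sub_zero, sub_zero, hz]
    simpa [hB0, mem_closedBall, dist_zero_right] using hx.1
  have hfin : volume (Ba ∩ B0) ≠ ⊤ :=
    (lt_of_le_of_lt (measure_mono Set.inter_subset_right)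
      (isCompact_closedBall _ _).measure_lt_top).ne
  have voleq : volume Ba = volume B0 := Measure.addHaar_closedBall_center volume a r
  have vdiff : volume (Ba \ B0) = volume (B0 \ Ba) := by
    have h1 : volume (Ba ∩ B0) + volume (Ba \ B0) = volume Ba := measure_inter_add_diff Ba hB0m
    have h2 : volume (B0 ∩ Ba) + volume (B0 \ Ba) = volume B0 := measure_inter_add_diff B0 hBam
    rw [Set.inter_comm] at h2
    rw [← h2, ← h1] at voleq
    exact (ENNReal.add_right_inj hfin).1 voleq
  have hup : ν (Ba \ B0) ≤ c * volume (Ba \ B0) := by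
    rw [hν, withDensity_apply _ (hBam.diff hB0m)]
    calc ∫⁻ x in Ba \ B0, ENNReal.ofReal (π x) ∂volume
        ≤ ∫⁻ _x in Ba \ B0, c ∂volume := setLIntegral_mono measurable_const key1
      _ = c * volume (Ba \ B0) := setLIntegral_const _ _
  have hlo : c * volume (B0 \ Ba) ≤ ν (B0 \ Ba) := by
    rw [hν, withDensity_apply _ (hB0m.diff hBam)]
    calc c * volume (B0 \ Ba) = ∫⁻ _x in B0 \ Ba, c ∂volume := (setLIntegral_const _ _).symm
      _ ≤ ∫⁻ x in B0 \ Ba, ENNReal.ofReal (π x) ∂volume := setLIntegral_mono hπm key2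
  calc ν Ba = ν (Ba ∩ B0) + ν (Ba \ B0) := (measure_inter_add_diff Ba hB0m).symm
    _ ≤ ν (Ba ∩ B0) + c * volume (Ba \ B0) := add_le_add_right hup _
    _ = ν (B0 ∩ Ba) + c * volume (B0 \ Ba) := by rw [Set.inter_comm, vdiff]
    _ ≤ ν (B0 ∩ Ba) + ν (B0 \ Ba) := add_le_add_right hlo _
    _ = ν B0 := measure_inter_add_diff B0 hBam

open Metric in
lemma shift_min_lintegral {m : ℕ} (π : EuclideanSpace ℝ (Fin m) → ℝ) (hm : Measurable π)
    (hsu : SymmUnimodal π 0)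
    (hprob : IsProbabilityMeasure (volume.withDensity fun x => ENNReal.ofReal (π x)))
    (a : EuclideanSpace ℝ (Fin m)) (A B : ℝ) (hA : 0 ≤ A) (hAB : A ≤ B) :
    ∫⁻ x, ENNReal.ofReal (min (‖x - 0‖^2 + A) B)
        ∂(volume.withDensity fun x => ENNReal.ofReal (π x))
      ≤ ∫⁻ x, ENNReal.ofReal (min (‖x - a‖^2 + A) B)
        ∂(volume.withDensity fun x => ENNReal.ofReal (π x)) := by
  set ν := volume.withDensity fun x => ENNReal.ofReal (π x) with hνdef
  set c := B - A with hcdef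
  have hc : 0 ≤ c := by simp [hcdef]; linarith
  have hmin : ∀ t : ℝ, min (t + A) B = min t c + A := by
    intro t
    rw [show B = c + A by simp [hcdef], min_add_add_right]
  have hsplit : ∀ b : EuclideanSpace ℝ (Fin m), ∀ x,
      ENNReal.ofReal (min (‖x - b‖^2 + A) B)
        = ENNReal.ofReal (min (‖x - b‖^2) c) + ENNReal.ofReal A := by
    intro b x
    rw [hmin, ENNReal.ofReal_add (le_min (by positivity) hc) hA]
  simp only [hsplit]
  rw [lintegral_add_right _ measurable_const, lintegral_add_right _ measurable_const]
  apply add_le_add_left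
  have hcont : ∀ b : EuclideanSpace ℝ (Fin m),
      Continuous fun x : EuclideanSpace ℝ (Fin m) => min (‖x - b‖^2) c :=
    fun b => (((continuous_id.sub continuous_const).norm.pow 2).min continuous_const)
  have layer : ∀ b : EuclideanSpace ℝ (Fin m),
      ∫⁻ x, ENNReal.ofReal (min (‖x - b‖^2) c) ∂ν
        = ∫⁻ t in Set.Ioi 0, ν {x | t < min (‖x - b‖^2) c} := by
    intro b
    exact lintegral_eq_lintegral_meas_lt ν (ae_of_all _ fun x => le_min (by positivity) hc)
      (hcont b).aemeasurable
  rw [layer 0, layer a]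
  apply lintegral_mono_ae
  rw [ae_restrict_iff' measurableSet_Ioi]
  apply ae_of_all
  intro t ht
  have ht0 : 0 < t := ht
  by_cases htc : t < c
  · have hset : ∀ b : EuclideanSpace ℝ (Fin m),
        {x | t < min (‖x - b‖^2) c} = (Metric.closedBall b (Real.sqrt t))ᶜ := by
      intro b
      ext x
      simp only [Set.mem_setOf_eq, Set.mem_compl_iff, mem_closedBall, dist_eq_norm, lt_min_iff,
        not_le]
      constructor
      · rintro ⟨h1, _⟩
        have hb : 0 < ‖x - b‖ := by nlinarith [norm_nonneg (x - b)]
        exact (Real.sqrt_lt' hb).2 h1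
      · intro h
        have hb : 0 < ‖x - b‖ := lt_of_le_of_lt (Real.sqrt_nonneg t) h
        exact ⟨(Real.sqrt_lt' hb).1 h, htc⟩
    rw [hset 0, hset a,
      measure_compl measurableSet_closedBall (measure_ne_top _ _),
      measure_compl measurableSet_closedBall (measure_ne_top _ _)]
    exact tsub_le_tsub_left (anderson π hm hsu a (Real.sqrt t) (Real.sqrt_nonneg t)) _
  · have hempty :
        {x : EuclideanSpace ℝ (Fin m) | t < min (‖x - (0:EuclideanSpace ℝ (Fin m))‖^2) c}
          = ∅ := by
      ext x
      simp only [Set.mem_setOf_eq, lt_min_iff, Set.mem_empty_iff_false, iff_false, not_and]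
      exact fun _ => htc
    rw [hempty]
    simp

end Helpers

/-- The `N`-sensor per-stage optimization: for `N ≥ 2` mutually
independent sources with symmetric and unimodal densities around the origin and finite
second moments, the all-zero prescription is a global minimizer of
`J(x̃¹,…,x̃^N) = E[min{Σᵢ‖Xⁱ−x̃ⁱ‖², min_j (Σ_{i≠j}‖Xⁱ−x̃ⁱ‖² + κ)}]`. -/
theorem zero_is_global_minimizer_N_sensors
    {Ω : Type} [MeasurableSpace Ω] (μ : Measure Ω) [IsProbabilityMeasure μ]
    (N : ℕ) (hN : 2 ≤ N) (n : Fin N → ℕ)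
    (X : ∀ i : Fin N, Ω → EuclideanSpace ℝ (Fin (n i)))
    (hXmeas : ∀ i, Measurable (X i))
    (hindep : iIndepFun X μ)
    (π : ∀ i : Fin N, EuclideanSpace ℝ (Fin (n i)) → ℝ)
    (hπ : ∀ i, IsDensityOf μ (X i) (π i))
    (hπsu : ∀ i, SymmUnimodal (π i) 0)
    (hXm : ∀ i, Integrable (fun ω => ‖X i ω‖ ^ 2) μ)
    (κ : ℝ) (hκ : 0 ≤ κ)
    (J : (∀ i : Fin N, EuclideanSpace ℝ (Fin (n i))) → ℝ)
    (hJ : ∀ xt, J xt = ∫ ω, min (∑ i, ‖X i ω - xt i‖ ^ 2)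
      (Finset.univ.inf' (Finset.univ_nonempty_iff.mpr ⟨⟨0, by omega⟩⟩)
        fun j => (∑ i ∈ Finset.univ.erase j, ‖X i ω - xt i‖ ^ 2) + κ) ∂μ) :
    ∀ xt, J (fun _ => 0) ≤ J xt := by
  intro xt
  classical
  have H : (Finset.univ : Finset (Fin N)).Nonempty :=
    Finset.univ_nonempty_iff.mpr ⟨⟨0, by omega⟩⟩
  -- the lintegral version of the objective
  set I : (∀ i, EuclideanSpace ℝ (Fin (n i))) → ℝ≥0∞ := fun b => ∫⁻ ω, ENNReal.ofReal
    (min (∑ i, ‖X i ω - b i‖ ^ 2)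
      (Finset.univ.inf' H fun j => (∑ i ∈ Finset.univ.erase j, ‖X i ω - b i‖ ^ 2) + κ)) ∂μ
    with hI
  have hnonneg : ∀ (b : ∀ i, EuclideanSpace ℝ (Fin (n i))) ω, 0 ≤ min (∑ i, ‖X i ω - b i‖ ^ 2)
      (Finset.univ.inf' H fun j => (∑ i ∈ Finset.univ.erase j, ‖X i ω - b i‖ ^ 2) + κ) := by
    intro b ω
    refine le_min (by positivity) (Finset.le_inf' _ _ fun j' _ => ?_)
    exact add_nonneg (Finset.sum_nonneg fun i _ => by positivity) hκ
  have hFmeas : ∀ b : ∀ i, EuclideanSpace ℝ (Fin (n i)), Measurable fun ω => min (∑ i, ‖X i ω - b i‖ ^ 2)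
      (Finset.univ.inf' H fun j => (∑ i ∈ Finset.univ.erase j, ‖X i ω - b i‖ ^ 2) + κ) := by
    intro b
    have hterm : ∀ i : Fin N, Measurable fun ω => ‖X i ω - b i‖ ^ 2 :=
      fun i => (((hXmeas i).sub measurable_const).norm).pow_const 2
    refine Measurable.min (Finset.measurable_sum _ fun i _ => hterm i) ?_
    exact measurable_inf'_fun H _ fun j' =>
      (Finset.measurable_sum _ fun i _ => hterm i).add measurable_const
  -- the objective equals the lintegral
  have hJI : ∀ b : ∀ i, EuclideanSpace ℝ (Fin (n i)), J b = (I b).toReal := by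
    intro b
    rw [hJ b]
    exact integral_eq_lintegral_of_nonneg_ae (ae_of_all _ (hnonneg b))
      (hFmeas b).aestronglyMeasurable
  -- finiteness
  have hIfin : ∀ b : ∀ i, EuclideanSpace ℝ (Fin (n i)), I b ≠ ⊤ := by
    intro b
    have hintone : ∀ i : Fin N, Integrable (fun ω => ‖X i ω - b i‖ ^ 2) μ := by
      intro i
      refine Integrable.mono' (g := fun ω => 2 * ‖X i ω‖ ^ 2 + 2 * ‖b i‖ ^ 2)
        (((hXm i).const_mul 2).add (integrable_const _))
        ((((hXmeas i).sub measurable_const).norm).pow_const 2).aestronglyMeasurable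
        (ae_of_all _ fun ω => ?_)
      show ‖‖X i ω - b i‖ ^ 2‖ ≤ 2 * ‖X i ω‖ ^ 2 + 2 * ‖b i‖ ^ 2
      rw [Real.norm_eq_abs, abs_of_nonneg (by positivity)]
      have h := norm_sub_le (X i ω) (b i)
      nlinarith [norm_nonneg (X i ω - b i), norm_nonneg (X i ω), norm_nonneg (b i),
        sq_nonneg (‖X i ω‖ - ‖b i‖)]
    have hint : Integrable (fun ω => ∑ i, ‖X i ω - b i‖ ^ 2) μ :=
      integrable_finset_sum _ fun i _ => hintone i
    have hle : I b ≤ ∫⁻ ω, ENNReal.ofReal (∑ i, ‖X i ω - b i‖ ^ 2) ∂μ :=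
      lintegral_mono fun ω => ENNReal.ofReal_le_ofReal (min_le_left _ _)
    exact (lt_of_le_of_lt hle hint.lintegral_lt_top).ne
  -- key single-coordinate step
  have key : ∀ (b : ∀ i, EuclideanSpace ℝ (Fin (n i))) (j : Fin N), I (Function.update b j 0) ≤ I b := by
    intro b j
    have hTne : (Finset.univ.erase j).Nonempty :=
      Finset.card_pos.1 (by
        rw [Finset.card_erase_of_mem (Finset.mem_univ j), Finset.card_univ, Fintype.card_fin]
        omega)
    set T := Finset.univ.erase j with hT
    haveI : Nonempty ↥T := Finset.nonempty_coe_sort.mpr hTne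
    have HT : (Finset.univ : Finset ↥T).Nonempty := Finset.univ_nonempty
    set Y : Ω → ∀ i : ↥T, EuclideanSpace ℝ (Fin (n ↑i)) := fun ω i => X ↑i ω with hY
    have hYmeas : Measurable Y := measurable_pi_lambda _ fun i => hXmeas ↑i
    set Afun : (∀ i : ↥T, EuclideanSpace ℝ (Fin (n ↑i))) → ℝ := fun y =>
      min (∑ i : ↥T, ‖y i - b ↑i‖ ^ 2)
        ((Finset.univ : Finset ↥T).inf' HT fun j' =>
          (∑ i ∈ (Finset.univ : Finset ↥T).erase j', ‖y i - b ↑i‖ ^ 2) + κ) with hA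
    set Bfun : (∀ i : ↥T, EuclideanSpace ℝ (Fin (n ↑i))) → ℝ := fun y =>
      (∑ i : ↥T, ‖y i - b ↑i‖ ^ 2) + κ with hB
    have hA0 : ∀ y, 0 ≤ Afun y := fun y =>
      le_min (Finset.sum_nonneg fun i _ => by positivity)
        (Finset.le_inf' _ _ fun j' _ =>
          add_nonneg (Finset.sum_nonneg fun i _ => by positivity) hκ)
    have hABle : ∀ y, Afun y ≤ Bfun y := fun y =>
      le_trans (min_le_left _ _) (le_add_of_nonneg_right hκ)
    have hterm : ∀ i : ↥T, Measurable fun y : ∀ i : ↥T, EuclideanSpace ℝ (Fin (n ↑i)) =>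
        ‖y i - b ↑i‖ ^ 2 :=
      fun i => (((measurable_pi_apply i).sub measurable_const).norm).pow_const 2
    have hAmeas : Measurable Afun :=
      (Finset.measurable_sum _ fun i _ => hterm i).min
        (measurable_inf'_fun HT _ fun j' =>
          (Finset.measurable_sum _ fun i _ => hterm i).add measurable_const)
    have hBmeas : Measurable Bfun :=
      (Finset.measurable_sum _ fun i _ => hterm i).add measurable_const
    have hindepj : IndepFun (X j) Y μ := by
      have hdisj : Disjoint ({j} : Finset (Fin N)) T :=
        Finset.disjoint_singleton_left.mpr (Finset.notMem_erase j _)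
      have h := hindep.indepFun_finset {j} T hdisj hXmeas
      have h2 := h.comp
        (measurable_pi_apply (⟨j, Finset.mem_singleton_self j⟩ : ↥({j} : Finset (Fin N))))
        measurable_id
      exact h2
    have hmap : μ.map (fun ω => (X j ω, Y ω)) = (μ.map (X j)).prod (μ.map Y) :=
      (indepFun_iff_map_prod_eq_prod_map_map (hXmeas j).aemeasurable hYmeas.aemeasurable).1
        hindepj
    haveI : IsProbabilityMeasure (μ.map (X j)) := Measure.isProbabilityMeasure_map (hXmeas j).aemeasurable
    haveI : IsProbabilityMeasure (μ.map Y) := Measure.isProbabilityMeasure_map hYmeas.aemeasurable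
    have hpt : ∀ (c : EuclideanSpace ℝ (Fin (n j))) (ω : Ω),
        min (∑ i, ‖X i ω - Function.update b j c i‖ ^ 2)
          (Finset.univ.inf' H fun j' =>
            (∑ i ∈ Finset.univ.erase j', ‖X i ω - Function.update b j c i‖ ^ 2) + κ)
          = min (‖X j ω - c‖ ^ 2 + Afun (Y ω)) (Bfun (Y ω)) := by
      intro c ω
      set u : Fin N → ℝ := fun i => ‖X i ω - Function.update b j c i‖ ^ 2 with hu
      rw [min_inf'_split H j hTne u κ]
      show (u j + min (∑ i ∈ T, u i) (T.inf' hTne fun j' => (∑ i ∈ T.erase j', u i) + κ))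
          ⊓ ((∑ i ∈ T, u i) + κ) = _
      have huj : u j = ‖X j ω - c‖ ^ 2 := by rw [hu]; simp [Function.update_self]
      have hucoe : ∀ i : ↥T, u ↑i = ‖Y ω i - b ↑i‖ ^ 2 := by
        intro i
        have hij : (↑i : Fin N) ≠ j := (Finset.mem_erase.1 i.2).1
        rw [hu]
        simp only [Function.update_of_ne hij]; rfl
      have hsum : ∑ i ∈ T, u i = ∑ i : ↥T, ‖Y ω i - b ↑i‖ ^ 2 := by
        rw [← Finset.sum_coe_sort T u]
        exact Finset.sum_congr rfl fun i _ => hucoe i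
      have herase : ∀ j' : ↥T, (∑ i ∈ (Finset.univ : Finset ↥T).erase j', ‖Y ω i - b ↑i‖ ^ 2)
          = ∑ i ∈ T.erase ↑j', u i := by
        intro j'
        have h1 := Finset.add_sum_erase (Finset.univ : Finset ↥T) (fun i => u ↑i)
          (Finset.mem_univ j')
        have h2 := Finset.add_sum_erase T u j'.2
        have h3 : ∑ i : ↥T, u ↑i = ∑ i ∈ T, u i := Finset.sum_coe_sort T u
        have h4 : ∑ i ∈ (Finset.univ : Finset ↥T).erase j', ‖Y ω i - b ↑i‖ ^ 2
            = ∑ i ∈ (Finset.univ : Finset ↥T).erase j', u ↑i :=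
          Finset.sum_congr rfl fun i _ => (hucoe i).symm
        rw [h4]
        linarith
      have hinfeq : (T.inf' hTne fun j' => (∑ i ∈ T.erase j', u i) + κ)
          = (Finset.univ : Finset ↥T).inf' HT fun j' =>
              (∑ i ∈ (Finset.univ : Finset ↥T).erase j', ‖Y ω i - b ↑i‖ ^ 2) + κ := by
        rw [← inf'_subtype T HT hTne (fun j' => (∑ i ∈ T.erase j', u i) + κ)]
        exact (Finset.inf'_congr HT rfl fun j' _ => by rw [herase j']).symm
      rw [huj, hsum, hinfeq, hA, hB]
    have hGmeas : ∀ c : EuclideanSpace ℝ (Fin (n j)), Measurable fun p :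
        EuclideanSpace ℝ (Fin (n j)) × (∀ i : ↥T, EuclideanSpace ℝ (Fin (n ↑i))) =>
        ENNReal.ofReal (min (‖p.1 - c‖ ^ 2 + Afun p.2) (Bfun p.2)) := by
      intro c
      apply Measurable.ennreal_ofReal
      exact ((((measurable_fst.sub measurable_const).norm).pow_const 2).add
        (hAmeas.comp measurable_snd)).min (hBmeas.comp measurable_snd)
    have hrepr : ∀ c : EuclideanSpace ℝ (Fin (n j)), I (Function.update b j c)
        = ∫⁻ y, ∫⁻ x, ENNReal.ofReal (min (‖x - c‖ ^ 2 + Afun y) (Bfun y))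
            ∂(μ.map (X j)) ∂(μ.map Y) := by
      intro c
      have hpair : Measurable fun ω => (X j ω, Y ω) := (hXmeas j).prodMk hYmeas
      rw [hI]
      calc ∫⁻ ω, ENNReal.ofReal
            (min (∑ i, ‖X i ω - Function.update b j c i‖ ^ 2)
              (Finset.univ.inf' H fun j' =>
                (∑ i ∈ Finset.univ.erase j', ‖X i ω - Function.update b j c i‖ ^ 2) + κ)) ∂μ
          = ∫⁻ ω, (fun p : EuclideanSpace ℝ (Fin (n j)) ×
              (∀ i : ↥T, EuclideanSpace ℝ (Fin (n ↑i))) =>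
              ENNReal.ofReal (min (‖p.1 - c‖ ^ 2 + Afun p.2) (Bfun p.2))) (X j ω, Y ω) ∂μ :=
            lintegral_congr fun ω => congrArg ENNReal.ofReal (hpt c ω)
        _ = ∫⁻ p, ENNReal.ofReal (min (‖p.1 - c‖ ^ 2 + Afun p.2) (Bfun p.2))
              ∂(μ.map fun ω => (X j ω, Y ω)) := (lintegral_map (hGmeas c) hpair).symm
        _ = ∫⁻ p, ENNReal.ofReal (min (‖p.1 - c‖ ^ 2 + Afun p.2) (Bfun p.2))
              ∂((μ.map (X j)).prod (μ.map Y)) := by rw [hmap]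
        _ = ∫⁻ y, ∫⁻ x, ENNReal.ofReal (min (‖x - c‖ ^ 2 + Afun y) (Bfun y))
              ∂(μ.map (X j)) ∂(μ.map Y) := lintegral_prod_symm _ (hGmeas c).aemeasurable
    have h0 := hrepr 0
    have hbb : I b = ∫⁻ y, ∫⁻ x, ENNReal.ofReal (min (‖x - b j‖ ^ 2 + Afun y) (Bfun y))
        ∂(μ.map (X j)) ∂(μ.map Y) := by
      conv_lhs => rw [← Function.update_eq_self j b]
      exact hrepr (b j)
    rw [h0, hbb]
    apply lintegral_mono
    intro y
    haveI hprob : IsProbabilityMeasure (volume.withDensity fun x => ENNReal.ofReal (π j x)) := by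
      rw [← (hπ j).2.2]
      infer_instance
    rw [(hπ j).2.2]
    exact shift_min_lintegral (π j) (hπ j).1 (hπsu j) hprob (b j) (Afun y) (Bfun y)
      (hA0 y) (hABle y)
  -- chain the updates
  have hchain : ∀ s : Finset (Fin N), I (fun i => if i ∈ s then 0 else xt i) ≤ I xt := by
    intro s
    induction s using Finset.induction_on with
    | empty => simp
    | @insert j s hj ih =>
        have hupd : (fun i => if i ∈ insert j s then (0 : EuclideanSpace ℝ (Fin (n i))) else xt i)
            = Function.update (fun i => if i ∈ s then (0 : EuclideanSpace ℝ (Fin (n i))) else xt i) j 0 := by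
          funext i
          by_cases hij : i = j
          · subst hij; simp [Function.update_self]
          · simp [Function.update_of_ne hij, Finset.mem_insert, hij]
        rw [hupd]
        exact le_trans (key _ j) ih
  have hzero : (fun i => if i ∈ (Finset.univ : Finset (Fin N)) then (0 : EuclideanSpace ℝ (Fin (n i))) else xt i)
      = fun _ => 0 := by funext i; simp
  have hfinal : I (fun _ => 0) ≤ I xt := by rw [← hzero]; exact hchain Finset.univ
  rw [hJI, hJI]
  exact ENNReal.toReal_le_toReal (ne_top_of_le_ne_top (hIfin xt) hfinal) (hIfin xt) |>.2 hfinal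
end

section
/- Let X¹ ∈ ℝ^{n₁} and X² ∈ ℝ^{n₂} be independent random vectors with finite second moments whose probability density functions are symmetric and unimodal around 0, and let w₁, w₂ > 0 and τ₁, τ₂ ≥ 0. Define J(x̃¹, x̃²) = E[ min{ w₁‖X¹ − x̃¹‖² + w₂‖X² − x̃²‖², w₂‖X² − x̃²‖² + τ₁, w₁‖X¹ − x̃¹‖² + τ₂ } ]. Then (0, 0) is a global minimizer of J, i.e., J(0, 0) ≤ J(x̃¹, x̃²) for all (x̃¹, x̃²) ∈ ℝ^{n₁} × ℝ^{n₂}. -/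
open MeasureTheory ProbabilityTheory Set

namespace ZeroMinAux

variable {n : ℕ}

/-- Anderson-type ball inequality for symmetric unimodal densities. -/
lemma ball_measure_le (π : EuclideanSpace ℝ (Fin n) → ℝ)
    (h0 : ∀ x, 0 ≤ π x) (hsu : SymmUnimodal π 0)
    (θ : EuclideanSpace ℝ (Fin n)) (ρ : ℝ) :
    (volume.withDensity fun x => ENNReal.ofReal (π x)) (Metric.ball θ ρ) ≤
      (volume.withDensity fun x => ENNReal.ofReal (π x))
        (Metric.ball (0 : EuclideanSpace ℝ (Fin n)) ρ) := by
  classical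
  set μd : Measure (EuclideanSpace ℝ (Fin n)) :=
    volume.withDensity fun x => ENNReal.ofReal (π x) with hμd
  set B0 : Set (EuclideanSpace ℝ (Fin n)) := Metric.ball (0 : EuclideanSpace ℝ (Fin n)) ρ
    with hB0def
  set Bθ : Set (EuclideanSpace ℝ (Fin n)) := Metric.ball θ ρ with hBθdef
  have hB0 : MeasurableSet B0 := measurableSet_ball
  have hBθ : MeasurableSet Bθ := measurableSet_ball
  have hdec1 : μd Bθ = μd (Bθ ∩ B0) + μd (Bθ \ B0) := (measure_inter_add_diff _ hB0).symm
  have hdec2 : μd B0 = μd (B0 ∩ Bθ) + μd (B0 \ Bθ) := (measure_inter_add_diff _ hBθ).symm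
  set E : Set (EuclideanSpace ℝ (Fin n)) := Bθ \ B0 with hEdef
  set D : Set (EuclideanSpace ℝ (Fin n)) := B0 \ Bθ with hDdef
  have hEm : MeasurableSet E := hBθ.diff hB0
  have hDm : MeasurableSet D := hB0.diff hBθ
  -- the two caps have equal (finite) Lebesgue measure
  have hballs : volume Bθ = volume B0 := Measure.addHaar_ball_center volume θ ρ
  have hfin : volume (Bθ ∩ B0) ≠ ⊤ := by
    refine ((measure_mono inter_subset_right).trans_lt ?_).ne
    rw [hB0def]; exact measure_ball_lt_top
  have hvolDE : volume E = volume D := by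
    have h1 : volume (Bθ ∩ B0) + volume E = volume Bθ := measure_inter_add_diff _ hB0
    have h2 : volume (B0 ∩ Bθ) + volume D = volume B0 := measure_inter_add_diff _ hBθ
    rw [inter_comm] at h2
    exact (ENNReal.add_right_inj hfin).mp (h1.trans (hballs.trans h2.symm))
  -- pointwise comparison of the density on D and E
  have hpair : ∀ x ∈ D, ∀ y ∈ E, π y ≤ π x := by
    intro x hx y hy
    apply hsu
    rw [sub_zero, sub_zero]
    have h1 : ‖x‖ < ρ := by
      have := hx.1
      rwa [hB0def, Metric.mem_ball, dist_zero_right] at this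
    have h2 : ρ ≤ ‖y‖ := by
      have := hy.2
      rw [hB0def, Metric.mem_ball, dist_zero_right] at this
      linarith [not_lt.mp this]
    linarith
  have hED : μd E ≤ μd D := by
    by_cases hE0 : volume E = 0
    · have : μd E = 0 := (withDensity_absolutelyContinuous volume _) hE0
      simp [this]
    · have hD0 : volume D ≠ 0 := by rw [← hvolDE]; exact hE0
      obtain ⟨x₀, hx₀⟩ := nonempty_of_measure_ne_zero hD0
      obtain ⟨y₀, hy₀⟩ := nonempty_of_measure_ne_zero hE0
      set s : ℝ := sSup (π '' E) with hs
      have hEne : (π '' E).Nonempty := ⟨π y₀, y₀, hy₀, rfl⟩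
      have hbdd : BddAbove (π '' E) := by
        refine ⟨π x₀, ?_⟩
        rintro _ ⟨y, hy, rfl⟩
        exact hpair x₀ hx₀ y hy
      have hles : ∀ y ∈ E, π y ≤ s := fun y hy => le_csSup hbdd ⟨y, hy, rfl⟩
      have hsle : ∀ x ∈ D, s ≤ π x := fun x hx =>
        csSup_le hEne (by rintro _ ⟨y, hy, rfl⟩; exact hpair x hx y hy)
      have hμE : μd E ≤ ENNReal.ofReal s * volume E := by
        rw [hμd, withDensity_apply _ hEm]
        calc ∫⁻ x in E, ENNReal.ofReal (π x) ∂volume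
            ≤ ∫⁻ _ in E, ENNReal.ofReal s ∂volume := by
              refine setLIntegral_mono' hEm fun x hx => ?_
              exact ENNReal.ofReal_le_ofReal (hles x hx)
          _ = ENNReal.ofReal s * volume E := by rw [setLIntegral_const]
      have hμD : ENNReal.ofReal s * volume D ≤ μd D := by
        rw [hμd, withDensity_apply _ hDm]
        calc ENNReal.ofReal s * volume D = ∫⁻ _ in D, ENNReal.ofReal s ∂volume := by
              rw [setLIntegral_const]
          _ ≤ ∫⁻ x in D, ENNReal.ofReal (π x) ∂volume := by
              refine setLIntegral_mono' hDm fun x hx => ?_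
              exact ENNReal.ofReal_le_ofReal (hsle x hx)
      calc μd E ≤ ENNReal.ofReal s * volume E := hμE
        _ = ENNReal.ofReal s * volume D := by rw [hvolDE]
        _ ≤ μd D := hμD
  rw [hdec1, hdec2, inter_comm]
  exact add_le_add le_rfl hED

/-- Layer cake: shifting the center of a "truncated paraboloid" integrand can only
decrease the integral against a symmetric unimodal density. -/
lemma shift_lintegral_le (π : EuclideanSpace ℝ (Fin n) → ℝ)
    (h0 : ∀ x, 0 ≤ π x) (hsu : SymmUnimodal π 0)
    (w e : ℝ) (hw : 0 < w) (θ : EuclideanSpace ℝ (Fin n)) :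
    ∫⁻ x, ENNReal.ofReal (max (e - w * ‖x - θ‖ ^ 2) 0)
        ∂(volume.withDensity fun x => ENNReal.ofReal (π x)) ≤
      ∫⁻ x, ENNReal.ofReal (max (e - w * ‖x‖ ^ 2) 0)
        ∂(volume.withDensity fun x => ENNReal.ofReal (π x)) := by
  set μd : Measure (EuclideanSpace ℝ (Fin n)) :=
    volume.withDensity fun x => ENNReal.ofReal (π x) with hμd
  have hcont : ∀ c : EuclideanSpace ℝ (Fin n),
      Continuous fun x : EuclideanSpace ℝ (Fin n) => max (e - w * ‖x - c‖ ^ 2) 0 := by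
    intro c
    exact (continuous_const.sub (continuous_const.mul
      (((continuous_id.sub continuous_const).norm).pow 2))).max continuous_const
  have key : ∀ c : EuclideanSpace ℝ (Fin n),
      ∫⁻ x, ENNReal.ofReal (max (e - w * ‖x - c‖ ^ 2) 0) ∂μd =
        ∫⁻ t in Ioi (0 : ℝ), μd {x | t < max (e - w * ‖x - c‖ ^ 2) 0} :=
    fun c => lintegral_eq_lintegral_meas_lt μd
      (Filter.Eventually.of_forall fun x => le_max_right _ _)
      (hcont c).aemeasurable
  have hsetball : ∀ (c : EuclideanSpace ℝ (Fin n)) (t : ℝ), 0 ≤ t →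
      {x : EuclideanSpace ℝ (Fin n) | t < max (e - w * ‖x - c‖ ^ 2) 0} =
        Metric.ball c (Real.sqrt ((e - t) / w)) := by
    intro c t ht
    ext x
    simp only [mem_setOf_eq, Metric.mem_ball, dist_eq_norm]
    constructor
    · intro hx
      have h1 : t < e - w * ‖x - c‖ ^ 2 := by
        rcases max_cases (e - w * ‖x - c‖ ^ 2) 0 with ⟨heq, _⟩ | ⟨heq, _⟩
        · rwa [heq] at hx
        · rw [heq] at hx; linarith
      have h2 : ‖x - c‖ ^ 2 < (e - t) / w := by
        rw [lt_div_iff₀ hw]; nlinarith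
      have h3 : (0 : ℝ) ≤ (e - t) / w := le_of_lt (lt_of_le_of_lt (sq_nonneg _) h2)
      exact (Real.lt_sqrt (norm_nonneg _)).mpr h2
    · intro hx
      have h2 : ‖x - c‖ ^ 2 < (e - t) / w := by
        have := (Real.lt_sqrt (norm_nonneg (x - c))).mp hx
        exact this
      have h1 : t < e - w * ‖x - c‖ ^ 2 := by
        have := (lt_div_iff₀ hw).mp h2
        nlinarith
      exact lt_of_lt_of_le h1 (le_max_left _ _)
  have key0 : ∫⁻ x, ENNReal.ofReal (max (e - w * ‖x‖ ^ 2) 0) ∂μd =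
      ∫⁻ t in Ioi (0 : ℝ), μd {x | t < max (e - w * ‖x - (0 : EuclideanSpace ℝ (Fin n))‖ ^ 2) 0} := by
    rw [← key 0]
    simp [sub_zero]
  rw [key θ, key0]
  refine lintegral_mono fun t => ?_
  rcases le_or_gt 0 t with ht | ht
  · rw [hsetball θ t ht, hsetball 0 t ht]
    exact ball_measure_le π h0 hsu θ _
  · have huniv : ∀ c : EuclideanSpace ℝ (Fin n),
        {x : EuclideanSpace ℝ (Fin n) | t < max (e - w * ‖x - c‖ ^ 2) 0} = univ := by
      intro c; ext x; simp only [mem_setOf_eq, mem_univ, iff_true]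
      exact lt_of_lt_of_le ht (le_max_right _ _)
    rw [huniv θ, huniv 0]

/-- Shifting the center in `min (w‖x−θ‖² + c) d` can only increase the expectation
against a symmetric unimodal density. -/
lemma integral_min_shift (π : EuclideanSpace ℝ (Fin n) → ℝ)
    (h0 : ∀ x, 0 ≤ π x) (hsu : SymmUnimodal π 0)
    (hprob : IsProbabilityMeasure (volume.withDensity fun x => ENNReal.ofReal (π x)))
    (w c d : ℝ) (hw : 0 < w) (hc : 0 ≤ c) (hcd : c ≤ d) (θ : EuclideanSpace ℝ (Fin n)) :
    ∫ x, min (w * ‖x‖ ^ 2 + c) d ∂(volume.withDensity fun x => ENNReal.ofReal (π x)) ≤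
      ∫ x, min (w * ‖x - θ‖ ^ 2 + c) d
        ∂(volume.withDensity fun x => ENNReal.ofReal (π x)) := by
  haveI := hprob
  set μd : Measure (EuclideanSpace ℝ (Fin n)) :=
    volume.withDensity fun x => ENNReal.ofReal (π x) with hμd
  have hid : ∀ u : ℝ, min (u + c) d = d - max (d - c - u) 0 := by
    intro u
    rcases le_total (u + c) d with h | h
    · rw [min_eq_left h, max_eq_left (by linarith)]; ring
    · rw [min_eq_right h, max_eq_right (by linarith)]; ring
  have hcontg : ∀ cen : EuclideanSpace ℝ (Fin n),
      Continuous fun x : EuclideanSpace ℝ (Fin n) => max (d - c - w * ‖x - cen‖ ^ 2) 0 := by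
    intro cen
    exact (continuous_const.sub (continuous_const.mul
      (((continuous_id.sub continuous_const).norm).pow 2))).max continuous_const
  have hgint : ∀ cen : EuclideanSpace ℝ (Fin n),
      Integrable (fun x => max (d - c - w * ‖x - cen‖ ^ 2) 0) μd := by
    intro cen
    refine (integrable_const (d - c)).mono' (hcontg cen).aestronglyMeasurable ?_
    refine Filter.Eventually.of_forall fun x => ?_
    rw [Real.norm_eq_abs, abs_of_nonneg (le_max_right _ _)]
    rcases max_cases (d - c - w * ‖x - cen‖ ^ 2) 0 with ⟨heq, _⟩ | ⟨heq, _⟩ <;> rw [heq]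
    · nlinarith [sq_nonneg ‖x - cen‖, norm_nonneg (x - cen)]
    · linarith
  have hgrep : ∀ cen : EuclideanSpace ℝ (Fin n),
      ∫ x, max (d - c - w * ‖x - cen‖ ^ 2) 0 ∂μd =
        (∫⁻ x, ENNReal.ofReal (max (d - c - w * ‖x - cen‖ ^ 2) 0) ∂μd).toReal := by
    intro cen
    exact integral_eq_lintegral_of_nonneg_ae
      (Filter.Eventually.of_forall fun x => le_max_right _ _)
      (hcontg cen).aestronglyMeasurable
  have hfin : ∀ cen : EuclideanSpace ℝ (Fin n),
      ∫⁻ x, ENNReal.ofReal (max (d - c - w * ‖x - cen‖ ^ 2) 0) ∂μd ≠ ⊤ := by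
    intro cen
    have hb : ∫⁻ x, ENNReal.ofReal (max (d - c - w * ‖x - cen‖ ^ 2) 0) ∂μd ≤
        ∫⁻ _, ENNReal.ofReal (d - c) ∂μd := by
      refine lintegral_mono fun x => ENNReal.ofReal_le_ofReal ?_
      rcases max_cases (d - c - w * ‖x - cen‖ ^ 2) 0 with ⟨heq, _⟩ | ⟨heq, _⟩ <;> rw [heq]
      · nlinarith [sq_nonneg ‖x - cen‖]
      · linarith
    refine (hb.trans_lt ?_).ne
    rw [lintegral_const, measure_univ, mul_one]
    exact ENNReal.ofReal_lt_top
  -- rewrite both integrands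
  have hrw : ∀ cen : EuclideanSpace ℝ (Fin n),
      ∫ x, min (w * ‖x - cen‖ ^ 2 + c) d ∂μd =
        d - ∫ x, max (d - c - w * ‖x - cen‖ ^ 2) 0 ∂μd := by
    intro cen
    have : (fun x : EuclideanSpace ℝ (Fin n) => min (w * ‖x - cen‖ ^ 2 + c) d) =
        fun x => d - max (d - c - w * ‖x - cen‖ ^ 2) 0 := by
      funext x; exact hid _
    rw [this, integral_sub (integrable_const d) (hgint cen), integral_const,
      probReal_univ]
    simp
  have hrw0 : ∫ x, min (w * ‖x‖ ^ 2 + c) d ∂μd =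
      d - ∫ x, max (d - c - w * ‖x - (0 : EuclideanSpace ℝ (Fin n))‖ ^ 2) 0 ∂μd := by
    rw [← hrw 0]
    simp [sub_zero]
  rw [hrw θ, hrw0]
  have hkey : ∫ x, max (d - c - w * ‖x - θ‖ ^ 2) 0 ∂μd ≤
      ∫ x, max (d - c - w * ‖x - (0 : EuclideanSpace ℝ (Fin n))‖ ^ 2) 0 ∂μd := by
    rw [hgrep θ, hgrep 0]
    refine ENNReal.toReal_mono (hfin 0) ?_
    have := shift_lintegral_le π h0 hsu w (d - c) hw θ
    simp only [sub_zero]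
    convert this using 2 <;> simp [sub_sub]
  linarith



lemma min3_right (A B t1 t2 : ℝ) :
    min (A + B) (min (B + t1) (A + t2)) = min (A + min B t2) (B + t1) := by
  rw [min_comm (B + t1) (A + t2), ← min_assoc, min_add_add_left]

lemma min3_left (A B t1 t2 : ℝ) :
    min (A + B) (min (B + t1) (A + t2)) = min (B + min A t1) (A + t2) := by
  rw [add_comm A B, ← min_assoc, min_add_add_left]

/-- The cost integrand. -/
noncomputable def Fw {n₁ n₂ : ℕ} (w₁ w₂ τ₁ τ₂ : ℝ) (u : EuclideanSpace ℝ (Fin n₁))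
    (v : EuclideanSpace ℝ (Fin n₂)) : ℝ :=
  min (w₁ * ‖u‖ ^ 2 + w₂ * ‖v‖ ^ 2) (min (w₂ * ‖v‖ ^ 2 + τ₁) (w₁ * ‖u‖ ^ 2 + τ₂))

variable {n₁ n₂ : ℕ}

lemma Fw_nonneg {w₁ w₂ τ₁ τ₂ : ℝ} (hw₁ : 0 ≤ w₁) (hw₂ : 0 ≤ w₂) (hτ₁ : 0 ≤ τ₁)
    (hτ₂ : 0 ≤ τ₂) (u : EuclideanSpace ℝ (Fin n₁)) (v : EuclideanSpace ℝ (Fin n₂)) :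
    0 ≤ Fw w₁ w₂ τ₁ τ₂ u v := by
  have h1 : 0 ≤ w₁ * ‖u‖ ^ 2 := by positivity
  have h2 : 0 ≤ w₂ * ‖v‖ ^ 2 := by positivity
  exact le_min (by linarith) (le_min (by linarith) (by linarith))

lemma Fw_le_right (w₁ w₂ τ₁ τ₂ : ℝ) (u : EuclideanSpace ℝ (Fin n₁))
    (v : EuclideanSpace ℝ (Fin n₂)) :
    Fw w₁ w₂ τ₁ τ₂ u v ≤ w₁ * ‖u‖ ^ 2 + τ₂ :=
  (min_le_right _ _).trans (min_le_right _ _)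

lemma Fw_min1 (w₁ w₂ τ₁ τ₂ : ℝ) (u : EuclideanSpace ℝ (Fin n₁))
    (v : EuclideanSpace ℝ (Fin n₂)) :
    Fw w₁ w₂ τ₁ τ₂ u v =
      min (w₁ * ‖u‖ ^ 2 + min (w₂ * ‖v‖ ^ 2) τ₂) (w₂ * ‖v‖ ^ 2 + τ₁) :=
  min3_right _ _ _ _

lemma Fw_min2 (w₁ w₂ τ₁ τ₂ : ℝ) (u : EuclideanSpace ℝ (Fin n₁))
    (v : EuclideanSpace ℝ (Fin n₂)) :
    Fw w₁ w₂ τ₁ τ₂ u v =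
      min (w₂ * ‖v‖ ^ 2 + min (w₁ * ‖u‖ ^ 2) τ₁) (w₁ * ‖u‖ ^ 2 + τ₂) :=
  min3_left _ _ _ _

lemma Fw_cont (w₁ w₂ τ₁ τ₂ : ℝ) (a : EuclideanSpace ℝ (Fin n₁))
    (b : EuclideanSpace ℝ (Fin n₂)) :
    Continuous fun p : EuclideanSpace ℝ (Fin n₁) × EuclideanSpace ℝ (Fin n₂) =>
      Fw w₁ w₂ τ₁ τ₂ (p.1 - a) (p.2 - b) := by
  have h1 : Continuous fun p : EuclideanSpace ℝ (Fin n₁) × EuclideanSpace ℝ (Fin n₂) =>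
      w₁ * ‖p.1 - a‖ ^ 2 :=
    continuous_const.mul (((continuous_fst.sub continuous_const).norm).pow 2)
  have h2 : Continuous fun p : EuclideanSpace ℝ (Fin n₁) × EuclideanSpace ℝ (Fin n₂) =>
      w₂ * ‖p.2 - b‖ ^ 2 :=
    continuous_const.mul (((continuous_snd.sub continuous_const).norm).pow 2)
  exact (h1.add h2).min ((h2.add continuous_const).min (h1.add continuous_const))

end ZeroMinAux

open ZeroMinAux in
/-- Per-stage optimization with unequal distortion weights
`w₁, w₂ > 0` and unequal continuation-plus-communication cost differences
`τ₁, τ₂ ≥ 0`: if the densities of the independent sources are symmetric and unimodal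
around the origin, then `(0, 0)` is a global minimizer of
`J(x̃¹, x̃²) = E[min{w₁‖X¹−x̃¹‖² + w₂‖X²−x̃²‖², w₂‖X²−x̃²‖² + τ₁, w₁‖X¹−x̃¹‖² + τ₂}]`. -/
theorem zero_is_global_minimizer_weighted
    {Ω : Type} [MeasurableSpace Ω] (μ : Measure Ω) [IsProbabilityMeasure μ]
    (n₁ n₂ : ℕ)
    (X1 : Ω → EuclideanSpace ℝ (Fin n₁)) (X2 : Ω → EuclideanSpace ℝ (Fin n₂))
    (hX1 : Measurable X1) (hX2 : Measurable X2)
    (π₁ : EuclideanSpace ℝ (Fin n₁) → ℝ) (π₂ : EuclideanSpace ℝ (Fin n₂) → ℝ)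
    (hπ₁ : IsDensityOf μ X1 π₁) (hπ₂ : IsDensityOf μ X2 π₂)
    (hπ₁su : SymmUnimodal π₁ 0) (hπ₂su : SymmUnimodal π₂ 0)
    (hX1m : Integrable (fun ω => ‖X1 ω‖ ^ 2) μ)
    (hX2m : Integrable (fun ω => ‖X2 ω‖ ^ 2) μ)
    (hindep : IndepFun X1 X2 μ)
    (w₁ w₂ τ₁ τ₂ : ℝ) (hw₁ : 0 < w₁) (hw₂ : 0 < w₂) (hτ₁ : 0 ≤ τ₁) (hτ₂ : 0 ≤ τ₂)
    (J : EuclideanSpace ℝ (Fin n₁) → EuclideanSpace ℝ (Fin n₂) → ℝ)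
    (hJ : ∀ xt1 xt2, J xt1 xt2 = ∫ ω, min
      (w₁ * ‖X1 ω - xt1‖ ^ 2 + w₂ * ‖X2 ω - xt2‖ ^ 2)
      (min (w₂ * ‖X2 ω - xt2‖ ^ 2 + τ₁) (w₁ * ‖X1 ω - xt1‖ ^ 2 + τ₂)) ∂μ) :
    ∀ xt1 xt2, J 0 0 ≤ J xt1 xt2 := by
  obtain ⟨hm₁, h0₁, hd₁⟩ := hπ₁
  obtain ⟨hm₂, h0₂, hd₂⟩ := hπ₂
  intro xt1 xt2
  haveI hp₁ : IsProbabilityMeasure (μ.map X1) := Measure.isProbabilityMeasure_map hX1.aemeasurable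
  haveI hp₂ : IsProbabilityMeasure (μ.map X2) := Measure.isProbabilityMeasure_map hX2.aemeasurable
  have hprob₁ : IsProbabilityMeasure
      ((volume : Measure (EuclideanSpace ℝ (Fin n₁))).withDensity
        fun x => ENNReal.ofReal (π₁ x)) := by rw [← hd₁]; exact hp₁
  have hprob₂ : IsProbabilityMeasure
      ((volume : Measure (EuclideanSpace ℝ (Fin n₂))).withDensity
        fun x => ENNReal.ofReal (π₂ x)) := by rw [← hd₂]; exact hp₂
  have hmap : μ.map (fun ω => (X1 ω, X2 ω)) = (μ.map X1).prod (μ.map X2) :=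
    (indepFun_iff_map_prod_eq_prod_map_map hX1.aemeasurable hX2.aemeasurable).mp hindep
  have hpairm : AEMeasurable (fun ω => (X1 ω, X2 ω)) μ := (hX1.prodMk hX2).aemeasurable
  -- J as an integral over the product of the marginal laws
  have hJeq : ∀ a b, J a b = ∫ p : EuclideanSpace ℝ (Fin n₁) × EuclideanSpace ℝ (Fin n₂),
      Fw w₁ w₂ τ₁ τ₂ (p.1 - a) (p.2 - b) ∂((μ.map X1).prod (μ.map X2)) := by
    intro a b
    rw [hJ a b, ← hmap, integral_map hpairm (Fw_cont w₁ w₂ τ₁ τ₂ a b).aestronglyMeasurable]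
    rfl
  -- integrability of the cost integrand on the product space
  have h1 : Integrable (fun x : EuclideanSpace ℝ (Fin n₁) => ‖x‖ ^ 2) (μ.map X1) :=
    (integrable_map_measure ((continuous_norm.pow 2).aestronglyMeasurable)
      hX1.aemeasurable).mpr hX1m
  have hint : ∀ (a : EuclideanSpace ℝ (Fin n₁)) (b : EuclideanSpace ℝ (Fin n₂)),
      Integrable (fun p : EuclideanSpace ℝ (Fin n₁) × EuclideanSpace ℝ (Fin n₂) =>
        Fw w₁ w₂ τ₁ τ₂ (p.1 - a) (p.2 - b)) ((μ.map X1).prod (μ.map X2)) := by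
    intro a b
    have hcontb : Continuous fun x : EuclideanSpace ℝ (Fin n₁) => w₁ * ‖x - a‖ ^ 2 + τ₂ :=
      (continuous_const.mul (((continuous_id.sub continuous_const).norm).pow 2)).add
        continuous_const
    have hBnd : Integrable (fun x : EuclideanSpace ℝ (Fin n₁) => w₁ * ‖x - a‖ ^ 2 + τ₂)
        (μ.map X1) := by
      have h2 : Integrable (fun x : EuclideanSpace ℝ (Fin n₁) =>
          w₁ * (2 * ‖x‖ ^ 2 + 2 * ‖a‖ ^ 2) + τ₂) (μ.map X1) :=
        (((h1.const_mul 2).add (integrable_const _)).const_mul w₁).add (integrable_const _)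
      refine h2.mono' hcontb.aestronglyMeasurable (Filter.Eventually.of_forall fun x => ?_)
      rw [Real.norm_eq_abs, abs_of_nonneg (by positivity)]
      have h3 : ‖x - a‖ ^ 2 ≤ 2 * ‖x‖ ^ 2 + 2 * ‖a‖ ^ 2 := by
        nlinarith [norm_sub_le x a, norm_nonneg (x - a), norm_nonneg x, norm_nonneg a,
          sq_nonneg (‖x‖ - ‖a‖)]
      nlinarith [mul_le_mul_of_nonneg_left h3 hw₁.le]
    have hfstprod : ((μ.map X1).prod (μ.map X2)).map Prod.fst = μ.map X1 :=
      Measure.fst_prod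
    have hBndprod : Integrable (fun p : EuclideanSpace ℝ (Fin n₁) ×
        EuclideanSpace ℝ (Fin n₂) => w₁ * ‖p.1 - a‖ ^ 2 + τ₂)
        ((μ.map X1).prod (μ.map X2)) := by
      have := (integrable_map_measure hcontb.aestronglyMeasurable
        measurable_fst.aemeasurable).mp (by rw [hfstprod]; exact hBnd)
      exact this
    refine hBndprod.mono' (Fw_cont w₁ w₂ τ₁ τ₂ a b).aestronglyMeasurable
      (Filter.Eventually.of_forall fun p => ?_)
    rw [Real.norm_eq_abs, abs_of_nonneg (Fw_nonneg hw₁.le hw₂.le hτ₁ hτ₂ _ _)]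
    exact Fw_le_right w₁ w₂ τ₁ τ₂ (p.1 - a) (p.2 - b)
  have hint00 : Integrable (fun p : EuclideanSpace ℝ (Fin n₁) ×
      EuclideanSpace ℝ (Fin n₂) => Fw w₁ w₂ τ₁ τ₂ p.1 p.2)
      ((μ.map X1).prod (μ.map X2)) := by
    have := hint 0 0; simpa [sub_zero] using this
  have hint0b : Integrable (fun p : EuclideanSpace ℝ (Fin n₁) ×
      EuclideanSpace ℝ (Fin n₂) => Fw w₁ w₂ τ₁ τ₂ p.1 (p.2 - xt2))
      ((μ.map X1).prod (μ.map X2)) := by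
    have := hint 0 xt2; simpa [sub_zero] using this
  -- step 2: shifting the second argument, pointwise in x
  have step2 : ∀ x : EuclideanSpace ℝ (Fin n₁),
      ∫ y, Fw w₁ w₂ τ₁ τ₂ x y ∂(μ.map X2) ≤
        ∫ y, Fw w₁ w₂ τ₁ τ₂ x (y - xt2) ∂(μ.map X2) := by
    intro x
    simp only [Fw_min2]
    rw [hd₂]
    exact ZeroMinAux.integral_min_shift π₂ h0₂ hπ₂su hprob₂ w₂
      (min (w₁ * ‖x‖ ^ 2) τ₁) (w₁ * ‖x‖ ^ 2 + τ₂) hw₂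
      (le_min (by positivity) hτ₁)
      ((min_le_left _ _).trans (le_add_of_nonneg_right hτ₂)) xt2
  -- step 1: shifting the first argument, pointwise in y
  have step1 : ∀ y : EuclideanSpace ℝ (Fin n₂),
      ∫ x, Fw w₁ w₂ τ₁ τ₂ x (y - xt2) ∂(μ.map X1) ≤
        ∫ x, Fw w₁ w₂ τ₁ τ₂ (x - xt1) (y - xt2) ∂(μ.map X1) := by
    intro y
    simp only [Fw_min1]
    rw [hd₁]
    exact ZeroMinAux.integral_min_shift π₁ h0₁ hπ₁su hprob₁ w₁
      (min (w₂ * ‖y - xt2‖ ^ 2) τ₂) (w₂ * ‖y - xt2‖ ^ 2 + τ₁) hw₁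
      (le_min (by positivity) hτ₂)
      ((min_le_left _ _).trans (le_add_of_nonneg_right hτ₁)) xt1
  calc J 0 0 = ∫ p : EuclideanSpace ℝ (Fin n₁) × EuclideanSpace ℝ (Fin n₂),
        Fw w₁ w₂ τ₁ τ₂ p.1 p.2 ∂((μ.map X1).prod (μ.map X2)) := by
        rw [hJeq 0 0]; simp [sub_zero]
    _ = ∫ x, ∫ y, Fw w₁ w₂ τ₁ τ₂ x y ∂(μ.map X2) ∂(μ.map X1) :=
        integral_prod _ hint00
    _ ≤ ∫ x, ∫ y, Fw w₁ w₂ τ₁ τ₂ x (y - xt2) ∂(μ.map X2) ∂(μ.map X1) :=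
        integral_mono hint00.integral_prod_left hint0b.integral_prod_left
          fun x => step2 x
    _ = ∫ p : EuclideanSpace ℝ (Fin n₁) × EuclideanSpace ℝ (Fin n₂),
        Fw w₁ w₂ τ₁ τ₂ p.1 (p.2 - xt2) ∂((μ.map X1).prod (μ.map X2)) :=
        (integral_prod _ hint0b).symm
    _ = ∫ y, ∫ x, Fw w₁ w₂ τ₁ τ₂ x (y - xt2) ∂(μ.map X1) ∂(μ.map X2) :=
        integral_prod_symm _ hint0b
    _ ≤ ∫ y, ∫ x, Fw w₁ w₂ τ₁ τ₂ (x - xt1) (y - xt2) ∂(μ.map X1) ∂(μ.map X2) :=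
        integral_mono hint0b.integral_prod_right (hint xt1 xt2).integral_prod_right
          fun y => step1 y
    _ = J xt1 xt2 := by
        rw [hJeq xt1 xt2, integral_prod_symm _ (hint xt1 xt2)]
end
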